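/- arXiv:2012.04002 — 8 statements merged into one kernel-verified Lean document; each statement's English description precedes it below -/
import Mathlib

section
/- Let $F : \mathbb{R}^d \to \mathbb{R}$ be coercive with locally Lipschitz gradient and finite infimum $F_\star$. Let $h : (0,\infty) \to [0,\infty)$ be $C^1$ with $\dot h \leq 0$, and let $r, q, p : (0,\infty) \to [0,\infty)$ be continuous with $r(t) \geq q(t)/4$ for all $t$. Define the energy $\mathcal{E}(h, (v,m,x)) = h(F(x) - F_\star) + \tfrac12 \| m / (v+\varepsilon)^{\odot 1/4} \|^2$ for $v \in [0,\infty)^d$, $m, x \in \mathbb{R}^d$, $\varepsilon > 0$. If $(v(t), m(t), x(t))$ solves $\dot v = p(t) S(x) - q(t) v$, $\dot m = h(t) \nabla F(x) - r(t) m$, $\dot x = -m/\sqrt{v+\varepsilon}$ with $S : \mathbb{R}^d \to [0,\infty)^d$ continuous, then for all $t$ in the interval of existence, $\frac{d}{dt} \mathcal{E}(h(t), (v(t),m(t),x(t))) \leq -\left(r(t) - \tfrac{q(t)}{4}\right) \left\| \frac{m(t)}{(v(t)+\varepsilon)^{\odot 1/4}} \right\|^2 + \dot h(t)(F(x(t))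 - F_\star) - \tfrac{p(t)}{4} \left\langle S(x(t)), \frac{m(t)^{\odot 2}}{(v(t)+\varepsilon)^{\odot 3/2}} \right\rangle$. In particular $t \mapsto \mathcal{E}(h(t), z(t))$ is non-increasing. -/
open Set Finset

/-- Helper: view a plain function as an element of Euclidean space. -/
def toE {d : ℕ} (f : Fin d → ℝ) : EuclideanSpace ℝ (Fin d) := WithLp.toLp 2 f

/-- The energy (Lyapunov) function
`𝓔(h,(v,m,x)) = h (F(x) - F⋆) + (1/2) ‖ m / (v+ε)^{⊙1/4} ‖²`. -/
noncomputable def energy {d : ℕ} (F : EuclideanSpace ℝ (Fin d) → ℝ) (Fstar ε : ℝ)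
    (h : ℝ) (v m x : EuclideanSpace ℝ (Fin d)) : ℝ :=
  h * (F x - Fstar) + (1 / 2) * ∑ i, (m i) ^ 2 / Real.sqrt (v i + ε)

lemma aux_ineq (ε vi mi Gi Si ht hr hq hp : ℝ) (hε : 0 < ε) (hvi : 0 ≤ vi)
    (hq0 : 0 ≤ hq) :
    ht * (Gi * (-mi / Real.sqrt (vi + ε)))
      + 1 / 2 * ((((2:ℕ):ℝ) * mi ^ 1 * (ht * Gi - hr * mi) * Real.sqrt (vi + ε)
          - mi ^ 2 * (1 / (2 * Real.sqrt (vi + ε)) * (hp * Si - hq * vi)))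
          / Real.sqrt (vi + ε) ^ 2)
      ≤ -(hr - hq / 4) * (mi ^ 2 / Real.sqrt (vi + ε))
        - hp / 4 * (Si * (mi ^ 2 / (vi + ε) ^ ((3:ℝ) / 2))) := by
  have ha : 0 < vi + ε := by linarith
  have hs : 0 < Real.sqrt (vi + ε) := Real.sqrt_pos.mpr ha
  have h32 : (vi + ε) ^ ((3:ℝ) / 2) = (vi + ε) * Real.sqrt (vi + ε) := by
    rw [show ((3:ℝ)/2) = 1 + 1/2 by norm_num, Real.rpow_add ha, Real.rpow_one,
      Real.sqrt_eq_rpow]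
  have hs2 : Real.sqrt (vi + ε) ^ 2 = vi + ε := Real.sq_sqrt ha.le
  set s := Real.sqrt (vi + ε) with hsdef
  rw [h32, ← hs2]
  have hvieq : vi = s ^ 2 - ε := by linarith
  rw [hvieq]
  have key : 0 ≤ hq * mi ^ 2 * ε * s := by positivity
  field_simp
  push_cast
  nlinarith [mul_nonneg key (by positivity : (0:ℝ) ≤ s ^ 4), mul_nonneg (mul_nonneg hq0 (sq_nonneg mi)) hε.le]

/-- decrease of the energy along the trajectories of the ODE. -/
theorem stmt1 {d : ℕ} (F : EuclideanSpace ℝ (Fin d) → ℝ)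
    (G : EuclideanSpace ℝ (Fin d) → EuclideanSpace ℝ (Fin d))
    (hgrad : ∀ x, HasGradientAt F (G x) x) (hGlip : LocallyLipschitz G)
    (hcoer : Filter.Tendsto F (Filter.cocompact _) Filter.atTop)
    (Fstar : ℝ) (hFstar : IsGLB (Set.range F) Fstar)
    (ε : ℝ) (hε : 0 < ε)
    (h h' r q p : ℝ → ℝ)
    (hhC1 : ∀ t ∈ Ioi (0 : ℝ), HasDerivAt h (h' t) t) (hh'cont : ContinuousOn h' (Ioi 0))
    (hh'le : ∀ t ∈ Ioi (0 : ℝ), h' t ≤ 0) (hhpos : ∀ t ∈ Ioi (0 : ℝ), 0 ≤ h t)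
    (hrcont : ContinuousOn r (Ioi 0)) (hqcont : ContinuousOn q (Ioi 0))
    (hpcont : ContinuousOn p (Ioi 0))
    (hrpos : ∀ t ∈ Ioi (0 : ℝ), 0 ≤ r t) (hqpos : ∀ t ∈ Ioi (0 : ℝ), 0 ≤ q t)
    (hppos : ∀ t ∈ Ioi (0 : ℝ), 0 ≤ p t)
    (hrq : ∀ t ∈ Ioi (0 : ℝ), q t / 4 ≤ r t)
    (S : EuclideanSpace ℝ (Fin d) → EuclideanSpace ℝ (Fin d))
    (hScont : Continuous S) (hSpos : ∀ x i, 0 ≤ S x i)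
    (t₁ t₂ : ℝ) (ht₁ : 0 < t₁)
    (v m x : ℝ → EuclideanSpace ℝ (Fin d))
    (hvpos : ∀ t ∈ Ioo t₁ t₂, ∀ i, 0 ≤ v t i)
    (hv : ∀ t ∈ Ioo t₁ t₂,
      HasDerivAt v (toE fun i => p t * S (x t) i - q t * v t i) t)
    (hm : ∀ t ∈ Ioo t₁ t₂,
      HasDerivAt m (toE fun i => h t * G (x t) i - r t * m t i) t)
    (hx : ∀ t ∈ Ioo t₁ t₂,
      HasDerivAt x (toE fun i => -(m t i) / Real.sqrt (v t i + ε)) t) :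
    (∀ t ∈ Ioo t₁ t₂,
      deriv (fun s => energy F Fstar ε (h s) (v s) (m s) (x s)) t ≤
        -(r t - q t / 4) * (∑ i, (m t i) ^ 2 / Real.sqrt (v t i + ε))
        + h' t * (F (x t) - Fstar)
        - (p t / 4) * ∑ i, S (x t) i * ((m t i) ^ 2 / (v t i + ε) ^ ((3 : ℝ) / 2))) ∧
      AntitoneOn (fun s => energy F Fstar ε (h s) (v s) (m s) (x s)) (Ioo t₁ t₂) := by
  have hE : ∀ t ∈ Ioo t₁ t₂,
      HasDerivAt (fun s => energy F Fstar ε (h s) (v s) (m s) (x s))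
        (h' t * (F (x t) - Fstar)
          + h t * (∑ i, G (x t) i * (-(m t i) / Real.sqrt (v t i + ε)))
          + 1 / 2 * ∑ i, ((((2:ℕ):ℝ) * m t i ^ 1 * (h t * G (x t) i - r t * m t i)
              * Real.sqrt (v t i + ε)
            - m t i ^ 2 * (1 / (2 * Real.sqrt (v t i + ε))
              * (p t * S (x t) i - q t * v t i)))
            / Real.sqrt (v t i + ε) ^ 2)) t := by
    intro t ht
    have ht0 : t ∈ Ioi (0:ℝ) := ht₁.trans ht.1
    have hvi : ∀ i, HasDerivAt (fun s => v s i) (p t * S (x t) i - q t * v t i) t := by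
      intro i
      have := (EuclideanSpace.proj (𝕜 := ℝ) i).hasFDerivAt.comp_hasDerivAt t (hv t ht)
      simpa [Function.comp_def, toE] using this
    have hmi : ∀ i, HasDerivAt (fun s => m s i) (h t * G (x t) i - r t * m t i) t := by
      intro i
      have := (EuclideanSpace.proj (𝕜 := ℝ) i).hasFDerivAt.comp_hasDerivAt t (hm t ht)
      simpa [Function.comp_def, toE] using this
    have hFx : HasDerivAt (fun s => F (x s))
        (∑ i, G (x t) i * (-(m t i) / Real.sqrt (v t i + ε))) t := by
      have := (hgrad (x t)).hasFDerivAt.comp_hasDerivAt t (hx t ht)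
      simpa [Function.comp_def, InnerProductSpace.toDual_apply_apply, PiLp.inner_apply,
        RCLike.inner_apply, conj_trivial, toE, mul_comm] using this
    have hterm : ∀ i, HasDerivAt (fun s => m s i ^ 2 / Real.sqrt (v s i + ε))
        ((((2:ℕ):ℝ) * m t i ^ 1 * (h t * G (x t) i - r t * m t i)
            * Real.sqrt (v t i + ε)
          - m t i ^ 2 * (1 / (2 * Real.sqrt (v t i + ε))
            * (p t * S (x t) i - q t * v t i)))
          / Real.sqrt (v t i + ε) ^ 2) t := by
      intro i
      have ha : 0 < v t i + ε := add_pos_of_nonneg_of_pos (hvpos t ht i) hε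
      have hsqrt : HasDerivAt (fun s => Real.sqrt (v s i + ε))
          (1 / (2 * Real.sqrt (v t i + ε)) * (p t * S (x t) i - q t * v t i)) t := by
        have := (Real.hasDerivAt_sqrt ha.ne').comp t ((hvi i).add_const ε)
        simpa [Function.comp_def] using this
      exact ((hmi i).pow 2).div hsqrt (Real.sqrt_pos.mpr ha).ne'
    have := ((hhC1 t ht0).fun_mul (hFx.sub_const Fstar)).fun_add
      (HasDerivAt.const_mul (1/2 : ℝ) (HasDerivAt.fun_sum (u := Finset.univ) fun i _ => hterm i))
    simpa [energy] using this
  have part1 : ∀ t ∈ Ioo t₁ t₂,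
      deriv (fun s => energy F Fstar ε (h s) (v s) (m s) (x s)) t ≤
        -(r t - q t / 4) * (∑ i, (m t i) ^ 2 / Real.sqrt (v t i + ε))
        + h' t * (F (x t) - Fstar)
        - (p t / 4) * ∑ i, S (x t) i * ((m t i) ^ 2 / (v t i + ε) ^ ((3 : ℝ) / 2)) := by
    intro t ht
    have ht0 : t ∈ Ioi (0:ℝ) := ht₁.trans ht.1
    rw [(hE t ht).deriv]
    calc h' t * (F (x t) - Fstar)
          + h t * (∑ i, G (x t) i * (-(m t i) / Real.sqrt (v t i + ε)))
          + 1 / 2 * ∑ i, ((((2:ℕ):ℝ) * m t i ^ 1 * (h t * G (x t) i - r t * m t i)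
              * Real.sqrt (v t i + ε)
            - m t i ^ 2 * (1 / (2 * Real.sqrt (v t i + ε))
              * (p t * S (x t) i - q t * v t i)))
            / Real.sqrt (v t i + ε) ^ 2)
        = h' t * (F (x t) - Fstar)
          + ∑ i, (h t * (G (x t) i * (-(m t i) / Real.sqrt (v t i + ε)))
            + 1 / 2 * ((((2:ℕ):ℝ) * m t i ^ 1 * (h t * G (x t) i - r t * m t i)
                * Real.sqrt (v t i + ε)
              - m t i ^ 2 * (1 / (2 * Real.sqrt (v t i + ε))
                * (p t * S (x t) i - q t * v t i)))
              / Real.sqrt (v t i + ε) ^ 2)) := by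
          rw [Finset.mul_sum, Finset.mul_sum, Finset.sum_add_distrib]; ring
      _ ≤ h' t * (F (x t) - Fstar)
          + ∑ i, (-(r t - q t / 4) * (m t i ^ 2 / Real.sqrt (v t i + ε))
            - p t / 4 * (S (x t) i * (m t i ^ 2 / (v t i + ε) ^ ((3:ℝ) / 2)))) := by
          refine add_le_add_right (Finset.sum_le_sum fun i _ => ?_) _
          exact aux_ineq ε (v t i) (m t i) (G (x t) i) (S (x t) i) (h t) (r t) (q t)
            (p t) hε (hvpos t ht i) (hqpos t ht0)
      _ = -(r t - q t / 4) * (∑ i, (m t i) ^ 2 / Real.sqrt (v t i + ε))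
          + h' t * (F (x t) - Fstar)
          - (p t / 4) * ∑ i, S (x t) i * ((m t i) ^ 2 / (v t i + ε) ^ ((3 : ℝ) / 2)) := by
          rw [Finset.sum_sub_distrib, ← Finset.mul_sum, ← Finset.mul_sum]; ring
  refine ⟨part1, ?_⟩
  have hderiv_nonpos : ∀ t ∈ Ioo t₁ t₂,
      deriv (fun s => energy F Fstar ε (h s) (v s) (m s) (x s)) t ≤ 0 := by
    intro t ht
    have ht0 : t ∈ Ioi (0:ℝ) := ht₁.trans ht.1
    have h1 : -(r t - q t / 4) * (∑ i, (m t i) ^ 2 / Real.sqrt (v t i + ε)) ≤ 0 := by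
      apply mul_nonpos_of_nonpos_of_nonneg
      · have := hrq t ht0; linarith
      · exact Finset.sum_nonneg fun i _ => div_nonneg (sq_nonneg _) (Real.sqrt_nonneg _)
    have h2 : h' t * (F (x t) - Fstar) ≤ 0 := by
      apply mul_nonpos_of_nonpos_of_nonneg (hh'le t ht0)
      have : Fstar ≤ F (x t) := hFstar.1 ⟨x t, rfl⟩
      linarith
    have h3 : 0 ≤ (p t / 4) * ∑ i, S (x t) i * ((m t i) ^ 2 / (v t i + ε) ^ ((3:ℝ)/2)) := by
      apply mul_nonneg (by have := hppos t ht0; linarith)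
      refine Finset.sum_nonneg fun i _ => mul_nonneg (hSpos _ _) ?_
      have ha : (0:ℝ) ≤ v t i + ε := by have := hvpos t ht i; linarith
      positivity
    have := part1 t ht
    linarith
  apply antitoneOn_of_deriv_nonpos (convex_Ioo t₁ t₂)
  · exact fun t ht => ((hE t ht).continuousAt).continuousWithinAt
  · rw [interior_Ioo]
    exact fun t ht => ((hE t ht).differentiableAt).differentiableWithinAt
  · rw [interior_Ioo]
    exact hderiv_nonpos
end

section
/- Let $F : \mathbb{R}^d \to \mathbb{R}$ be $C^1$ with locally Lipschitz gradient, and let $(m, x) : \mathbb{R}_+ \to \mathbb{R}^d \times \mathbb{R}^d$ solve the Nesterov ODE $\dot m(t) = \nabla F(x(t)) - \frac{\alpha}{t} m(t)$, $\dot x(t) = -m(t)$ for some $\alpha > 0$. Set $\kappa = \sqrt{2\alpha + 2}$, $\beta = \kappa^2/4$, and define $y(t) = \frac{\kappa\, m(\kappa\sqrt{t})}{2\sqrt{t}}$ and $u(t) = x(\kappa\sqrt{t})$ for $t > 0$. Then $(y, u)$ satisfies $\dot y(t) = \frac{\beta}{t}(\nabla F(u(t)) - y(t))$ and $\dot u(t)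 = -y(t)$. -/
open Set

/-- the change of variables relating the Nesterov ODE to the heavy-ball
ODE with polynomial memory. -/
theorem stmt2 {d : ℕ} (F : EuclideanSpace ℝ (Fin d) → ℝ)
    (G : EuclideanSpace ℝ (Fin d) → EuclideanSpace ℝ (Fin d))
    (hgrad : ∀ x, HasGradientAt F (G x) x) (hGlip : LocallyLipschitz G)
    (α : ℝ) (hα : 0 < α)
    (m x : ℝ → EuclideanSpace ℝ (Fin d))
    (hm : ∀ t > (0 : ℝ), HasDerivAt m (G (x t) - (α / t) • m t) t)
    (hx : ∀ t > (0 : ℝ), HasDerivAt x (-(m t)) t) :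
    ∀ t > (0 : ℝ),
      (HasDerivAt
        (fun s => (Real.sqrt (2 * α + 2) / (2 * Real.sqrt s)) •
          m (Real.sqrt (2 * α + 2) * Real.sqrt s))
        (((Real.sqrt (2 * α + 2)) ^ 2 / 4 / t) •
          (G (x (Real.sqrt (2 * α + 2) * Real.sqrt t)) -
            (Real.sqrt (2 * α + 2) / (2 * Real.sqrt t)) •
              m (Real.sqrt (2 * α + 2) * Real.sqrt t))) t) ∧
      (HasDerivAt (fun s => x (Real.sqrt (2 * α + 2) * Real.sqrt s))
        (-((Real.sqrt (2 * α + 2) / (2 * Real.sqrt t)) •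
            m (Real.sqrt (2 * α + 2) * Real.sqrt t))) t) := by
  intro t ht
  set κ := Real.sqrt (2 * α + 2) with hκdef
  have h2 : (0:ℝ) < 2 * α + 2 := by linarith
  have hκ : 0 < κ := Real.sqrt_pos.mpr h2
  have hκsq : κ ^ 2 = 2 * α + 2 := Real.sq_sqrt h2.le
  have hst : 0 < Real.sqrt t := Real.sqrt_pos.mpr ht
  have htsq : Real.sqrt t ^ 2 = t := Real.sq_sqrt ht.le
  have hs : 0 < κ * Real.sqrt t := mul_pos hκ hst
  have hsqrt : HasDerivAt Real.sqrt (1 / (2 * Real.sqrt t)) t :=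
    Real.hasDerivAt_sqrt ht.ne'
  have hφ : HasDerivAt (fun s => κ * Real.sqrt s) (κ / (2 * Real.sqrt t)) t := by
    simpa [div_eq_mul_inv, mul_assoc] using hsqrt.const_mul κ
  have hu : HasDerivAt (fun s => x (κ * Real.sqrt s))
      ((κ / (2 * Real.sqrt t)) • (-(m (κ * Real.sqrt t)))) t := by
    exact (hx _ hs).scomp t hφ
  have hms : HasDerivAt (fun s => m (κ * Real.sqrt s))
      ((κ / (2 * Real.sqrt t)) •
        (G (x (κ * Real.sqrt t)) - (α / (κ * Real.sqrt t)) • m (κ * Real.sqrt t))) t := by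
    exact (hm _ hs).scomp t hφ
  have hc : HasDerivAt (fun s => κ / (2 * Real.sqrt s))
      (-κ / (4 * t * Real.sqrt t)) t := by
    have h1 : HasDerivAt (fun s => 2 * Real.sqrt s) (2 * (1 / (2 * Real.sqrt t))) t :=
      hsqrt.const_mul 2
    have h2' : (2 * Real.sqrt t) ≠ 0 := by positivity
    have := (h1.inv h2').const_mul κ
    refine this.congr_deriv ?_
    field_simp
    nlinarith [htsq, hst]
  have hy := hc.smul hms
  refine ⟨?_, ?_⟩
  · refine hy.congr_deriv ?_
    match_scalars
    · field_simp
      linear_combination (-4) * htsq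
    · field_simp
      linear_combination (2*t) * hκsq + (-4 + 2*κ^2) * htsq
  · simpa [smul_neg] using hu
end

section
/- Let $r_\infty > 0$, $h_\infty > 0$, let $H \in \mathbb{R}^{d\times d}$ be a symmetric positive definite matrix, and let $V \in \mathbb{R}^{d\times d}$ be a diagonal matrix with positive diagonal entries. Consider the block matrix $\mathcal{H} = \begin{bmatrix} -r_\infty I_d & h_\infty H \\ -V & 0 \end{bmatrix} \in \mathbb{R}^{2d \times 2d}$. Then $\mathcal{H}$ is Hurwitz: every eigenvalue of $\mathcal{H}$ has strictly negative real part. Moreover, the largest real part of the eigenvalues of $\mathcal{H}$ equals $-L$ where $L = \frac{r_\infty}{2}\left(1 - \sqrt{\max\left(1 - \frac{4 h_\infty \pi_1}{r_\infty^2}, 0\right)}\right) > 0$ and $\pi_1 > 0$ is the smallest eigenvalue of $V^{1/2} H V^{1/2}$. -/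
open Matrix

theorem mem_spec_iff_det {n : Type*} [Fintype n] [DecidableEq n] (A : Matrix n n ℂ) (ζ : ℂ) :
    ζ ∈ spectrum ℂ A ↔ (ζ • (1 : Matrix n n ℂ) - A).det = 0 := by
  rw [spectrum.mem_iff, Algebra.algebraMap_eq_smul_one,
    ← not_iff_not, not_not, Matrix.isUnit_iff_isUnit_det, isUnit_iff_ne_zero, ne_eq]

theorem key {d : ℕ} (r h : ℝ) (hr : 0 < r) (hh : 0 < h)
    (H : Matrix (Fin d) (Fin d) ℝ) (hHsymm : H.IsSymm)
    (vd : Fin d → ℝ) (hvd : ∀ i, 0 < vd i)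
    (hM : (Matrix.diagonal (fun i => Real.sqrt (vd i)) * H *
        Matrix.diagonal (fun i => Real.sqrt (vd i))).IsHermitian)
    (ζ : ℂ) (hζr : ζ + r ≠ 0) :
    (ζ ∈ spectrum ℂ
        ((Matrix.fromBlocks (-(r • (1 : Matrix (Fin d) (Fin d) ℝ))) (h • H)
          (-(Matrix.diagonal vd)) 0).map (algebraMap ℝ ℂ))
      ↔ ∃ i, ζ ^ 2 + r * ζ + h * hM.eigenvalues i = 0) := by
  classical
  set φ := RingHom.mapMatrix (m := Fin d) (algebraMap ℝ ℂ) with hφ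
  set Hc := H.map (algebraMap ℝ ℂ) with hHc
  set Vc := Matrix.diagonal (fun i => (vd i : ℂ)) with hVc
  set Wc := Matrix.diagonal (fun i => (Real.sqrt (vd i) : ℂ)) with hWc
  set M := Matrix.diagonal (fun i => Real.sqrt (vd i)) * H *
      Matrix.diagonal (fun i => Real.sqrt (vd i)) with hMdef
  set μ := hM.eigenvalues with hμ
  -- step 1: block structure
  rw [mem_spec_iff_det]
  have hblock : ζ • (1 : Matrix (Fin d ⊕ Fin d) (Fin d ⊕ Fin d) ℂ) -
      (Matrix.fromBlocks (-(r • (1 : Matrix (Fin d) (Fin d) ℝ))) (h • H)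
          (-(Matrix.diagonal vd)) 0).map (algebraMap ℝ ℂ)
      = fromBlocks ((ζ + r) • 1) ((-h : ℂ) • Hc) Vc (ζ • 1) := by
    ext i j
    rcases i with i | i <;> rcases j with j | j <;>
      simp [Matrix.map_apply, Matrix.one_apply, Matrix.diagonal, apply_ite (algebraMap ℝ ℂ),
        Complex.coe_algebraMap, mul_comm, add_mul, hHc, hVc] <;> split <;> simp [add_mul, mul_comm]
  rw [hblock]
  -- step 2: Schur complement determinant
  letI : Invertible ((ζ + r) • (1 : Matrix (Fin d) (Fin d) ℂ)) :=
    ⟨(ζ + r)⁻¹ • 1, by rw [smul_mul_smul_comm, inv_mul_cancel₀ hζr, one_mul, one_smul],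
      by rw [smul_mul_smul_comm, mul_inv_cancel₀ hζr, one_mul, one_smul]⟩
  rw [Matrix.det_fromBlocks₁₁]
  have hinv : ⅟((ζ + r) • (1 : Matrix (Fin d) (Fin d) ℂ)) = (ζ + r)⁻¹ • 1 := rfl
  rw [hinv]
  have hdetA : ((ζ + r) • (1 : Matrix (Fin d) (Fin d) ℂ)).det = (ζ + r) ^ d := by
    simp [Matrix.det_smul]
  rw [hdetA]
  have h1 : ζ • (1 : Matrix (Fin d) (Fin d) ℂ) - Vc * ((ζ + r)⁻¹ • 1) * ((-h : ℂ) • Hc)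
      = ζ • 1 + ((ζ + r)⁻¹ * h) • (Vc * Hc) := by
    simp only [Matrix.mul_smul, Matrix.smul_mul, Matrix.mul_one]
    module
  rw [h1]
  have hpow : (ζ + r) ^ d ≠ 0 := pow_ne_zero _ hζr
  rw [mul_eq_zero, or_iff_right hpow]
  -- multiply by (ζ+r)
  have h2 : (ζ + r) • (ζ • (1 : Matrix (Fin d) (Fin d) ℂ) + ((ζ + r)⁻¹ * h) • (Vc * Hc))
      = (ζ ^ 2 + r * ζ) • (1 : Matrix (Fin d) (Fin d) ℂ) + (h : ℂ) • (Vc * Hc) := by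
    match_scalars
    · ring
    · field_simp
  have hdet2 : (ζ • (1 : Matrix (Fin d) (Fin d) ℂ) + ((ζ + r)⁻¹ * h) • (Vc * Hc)).det = 0 ↔
      ((ζ ^ 2 + r * ζ) • (1 : Matrix (Fin d) (Fin d) ℂ) + (h : ℂ) • (Vc * Hc)).det = 0 := by
    rw [← h2, Matrix.det_smul, mul_eq_zero]
    simp only [Fintype.card_fin]
    rw [or_iff_right hpow]
  rw [hdet2]
  set c : ℂ := ζ ^ 2 + r * ζ with hc
  -- conjugate by Wc
  have hWW : Wc * Wc = Vc := by
    rw [hWc, hVc, Matrix.diagonal_mul_diagonal]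
    exact congrArg Matrix.diagonal (funext fun i => by
      rw [← Complex.ofReal_mul, Real.mul_self_sqrt (hvd i).le])
  have hMc : φ M = Wc * Hc * Wc := by
    rw [hMdef, _root_.map_mul, _root_.map_mul, hφ]
    simp only [RingHom.mapMatrix_apply]
    simp only [Matrix.diagonal_map (map_zero (algebraMap ℝ ℂ))]
    rfl
  have hconj : (c • 1 + (h : ℂ) • (Vc * Hc)) * Wc = Wc * (c • 1 + (h : ℂ) • (φ M)) := by
    rw [hMc, ← hWW]
    noncomm_ring
  have hdetW : Wc.det ≠ 0 := by
    rw [hWc, Matrix.det_diagonal]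
    exact Finset.prod_ne_zero_iff.2 fun i _ =>
      Complex.ofReal_ne_zero.2 (Real.sqrt_pos.2 (hvd i)).ne'
  have hdet3 : (c • 1 + (h : ℂ) • (Vc * Hc)).det = (c • 1 + (h : ℂ) • (φ M)).det := by
    have := congrArg Matrix.det hconj
    rw [Matrix.det_mul, Matrix.det_mul, mul_comm Wc.det] at this
    exact mul_right_cancel₀ hdetW this
  rw [hdet3]
  -- spectral theorem
  set U : Matrix (Fin d) (Fin d) ℝ := (hM.eigenvectorUnitary : Matrix (Fin d) (Fin d) ℝ) with hU
  set Dc : Matrix (Fin d) (Fin d) ℂ := Matrix.diagonal (fun i => (μ i : ℂ)) with hDc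
  have hUU : U * star U = 1 := (Matrix.mem_unitaryGroup_iff).mp (hM.eigenvectorUnitary).2
  have hMd : φ M = φ U * Dc * φ (star U) := by
    rw [show M = U * Matrix.diagonal (RCLike.ofReal ∘ μ) * star U from hM.spectral_theorem,
      _root_.map_mul, _root_.map_mul, hφ]
    simp only [RingHom.mapMatrix_apply]
    simp only [Matrix.diagonal_map (map_zero (algebraMap ℝ ℂ))]
    rfl
  have hUc : φ U * φ (star U) = 1 := by rw [← RingHom.map_mul, hUU, RingHom.map_one]
  have hUU' : star U * U = 1 := (Matrix.mem_unitaryGroup_iff').mp (hM.eigenvectorUnitary).2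
  have hUc' : φ (star U) * φ U = 1 := by rw [← RingHom.map_mul, hUU', RingHom.map_one]
  have hconj2 : c • (1 : Matrix (Fin d) (Fin d) ℂ) + (h : ℂ) • (φ M)
      = φ U * (c • 1 + (h : ℂ) • Dc) * φ (star U) := by
    rw [Matrix.mul_add, Matrix.add_mul, Matrix.mul_smul, Matrix.mul_one, Matrix.smul_mul, hUc,
      Matrix.mul_smul, Matrix.smul_mul, hMd]
  have hdet4 : (c • (1 : Matrix (Fin d) (Fin d) ℂ) + (h : ℂ) • (φ M)).det
      = (c • (1 : Matrix (Fin d) (Fin d) ℂ) + (h : ℂ) • Dc).det := by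
    rw [hconj2, Matrix.det_mul, Matrix.det_mul, mul_comm, ← mul_assoc, ← Matrix.det_mul, hUc',
      Matrix.det_one, one_mul]
  rw [hdet4]
  have hdiag : c • (1 : Matrix (Fin d) (Fin d) ℂ) + (h : ℂ) • Dc
      = Matrix.diagonal (fun i => c + h * μ i) := by
    ext i j
    by_cases hij : i = j
    · subst hij; simp [hDc, Matrix.one_apply]
    · simp [hDc, Matrix.one_apply, Matrix.diagonal_apply_ne _ hij, hij]
  rw [hdiag, Matrix.det_diagonal, Finset.prod_eq_zero_iff]
  constructor
  · rintro ⟨i, -, hi⟩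
    exact ⟨i, by rw [hc] at hi; linear_combination hi⟩
  · rintro ⟨i, hi⟩
    exact ⟨i, Finset.mem_univ i, by rw [hc]; linear_combination hi⟩

-- scalar quadratic upper bound
theorem quad_bound (r h μ π1 : ℝ) (hh : 0 < h) (hμ : π1 ≤ μ)
    (ζ : ℂ) (hζ : ζ ^ 2 + r * ζ + h * μ = 0) :
    ζ.re ≤ (-r + Real.sqrt (max (r ^ 2 - 4 * h * π1) 0)) / 2 := by
  set S := Real.sqrt (max (r ^ 2 - 4 * h * π1) 0) with hS
  have hS0 : 0 ≤ S := Real.sqrt_nonneg _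
  rw [Complex.ext_iff] at hζ
  obtain ⟨hre, him⟩ := hζ
  simp only [Complex.add_re, Complex.add_im, Complex.mul_re, Complex.mul_im, Complex.ofReal_re,
    Complex.ofReal_im, Complex.zero_re, Complex.zero_im, pow_two] at hre him
  have hfac : ζ.im * (2 * ζ.re + r) = 0 := by linarith
  rcases mul_eq_zero.mp hfac with h0 | h0
  · -- real root
    have hre' : ζ.re * ζ.re + r * ζ.re + h * μ = 0 := by rw [h0] at hre; linarith
    have hsq : (2 * ζ.re + r) ^ 2 ≤ max (r ^ 2 - 4 * h * π1) 0 := by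
      have : (2 * ζ.re + r) ^ 2 = r ^ 2 - 4 * h * μ := by nlinarith
      have h2 : r ^ 2 - 4 * h * μ ≤ r ^ 2 - 4 * h * π1 := by nlinarith
      calc (2 * ζ.re + r) ^ 2 ≤ r ^ 2 - 4 * h * π1 := by linarith
      _ ≤ _ := le_max_left _ _
    have : 2 * ζ.re + r ≤ S := by
      calc 2 * ζ.re + r ≤ |2 * ζ.re + r| := le_abs_self _
      _ = Real.sqrt ((2 * ζ.re + r) ^ 2) := (Real.sqrt_sq_eq_abs _).symm
      _ ≤ S := Real.sqrt_le_sqrt hsq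
    linarith
  · linarith

-- scalar existence of extremal root
theorem quad_root (r h π1 : ℝ) (hr : 0 < r) (hh : 0 < h) (hπ1pos : 0 < π1) :
    ∃ ζ : ℂ, ζ ^ 2 + r * ζ + h * π1 = 0 ∧
      ζ.re = (-r + Real.sqrt (max (r ^ 2 - 4 * h * π1) 0)) / 2 := by
  by_cases hd : 0 ≤ r ^ 2 - 4 * h * π1
  · set x : ℝ := (-r + Real.sqrt (r ^ 2 - 4 * h * π1)) / 2 with hx
    refine ⟨(x : ℂ), ?_, ?_⟩
    · have hxx : x ^ 2 + r * x + h * π1 = 0 := by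
        have hs := Real.sq_sqrt hd
        rw [hx]; nlinarith [hs]
      have := congrArg Complex.ofReal hxx
      push_cast at this
      convert this using 2
    · rw [Complex.ofReal_re, hx, max_eq_left hd]
  · push_neg at hd
    set b : ℝ := Real.sqrt (h * π1 - r ^ 2 / 4) with hb
    have hs : b * b = h * π1 - r ^ 2 / 4 := Real.mul_self_sqrt (by nlinarith)
    refine ⟨(↑(-r / 2) + ↑b * Complex.I), ?_, ?_⟩
    · rw [Complex.ext_iff]
      constructor <;>
        simp only [Complex.add_re, Complex.add_im, Complex.mul_re, Complex.mul_im,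
          Complex.ofReal_re, Complex.ofReal_im, Complex.I_re, Complex.I_im, Complex.zero_re,
          Complex.zero_im, pow_two] <;> nlinarith [hs]
    · have hmax : max (r ^ 2 - 4 * h * π1) 0 = 0 := max_eq_right (by nlinarith)
      rw [hmax, Real.sqrt_zero]
      simp


/-- the drift matrix `𝓗 = [[-r∞ I, h∞ H],[-V, 0]]` is Hurwitz, and
the largest real part of its eigenvalues equals `-L`. -/
theorem stmt5 {d : ℕ} (r h : ℝ) (hr : 0 < r) (hh : 0 < h)
    (H : Matrix (Fin d) (Fin d) ℝ) (hHsymm : H.IsSymm) (hHpd : H.PosDef)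
    (vd : Fin d → ℝ) (hvd : ∀ i, 0 < vd i)
    (π1 : ℝ)
    (hπ1 : IsLeast (spectrum ℝ
      (Matrix.diagonal (fun i => Real.sqrt (vd i)) * H *
        Matrix.diagonal (fun i => Real.sqrt (vd i)))) π1)
    (hπ1pos : 0 < π1) :
    (∀ ζ ∈ spectrum ℂ
        ((Matrix.fromBlocks (-(r • (1 : Matrix (Fin d) (Fin d) ℝ))) (h • H)
          (-(Matrix.diagonal vd)) 0).map (algebraMap ℝ ℂ)),
      ζ.re < 0) ∧
    0 < r / 2 * (1 - Real.sqrt (max (1 - 4 * h * π1 / r ^ 2) 0)) ∧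
    IsGreatest (Complex.re '' spectrum ℂ
        ((Matrix.fromBlocks (-(r • (1 : Matrix (Fin d) (Fin d) ℝ))) (h • H)
          (-(Matrix.diagonal vd)) 0).map (algebraMap ℝ ℂ)))
      (-(r / 2 * (1 - Real.sqrt (max (1 - 4 * h * π1 / r ^ 2) 0)))) := by
  classical
  set W : Matrix (Fin d) (Fin d) ℝ := Matrix.diagonal (fun i => Real.sqrt (vd i)) with hW
  have hH : H.IsHermitian := by
    rw [Matrix.IsHermitian, Matrix.conjTranspose_eq_transpose_of_trivial]; exact hHsymm
  have hM : (W * H * W).IsHermitian := by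
    have hWc : Wᴴ = W := by
      rw [Matrix.conjTranspose_eq_transpose_of_trivial, hW, Matrix.diagonal_transpose]
    have := Matrix.isHermitian_mul_mul_conjTranspose W hH
    rwa [hWc] at this
  set μ := hM.eigenvalues with hμ
  have hspecR : spectrum ℝ (W * H * W) = Set.range μ := hM.spectrum_real_eq_range_eigenvalues
  rw [hspecR] at hπ1
  obtain ⟨⟨i₀, hi₀⟩, hlb⟩ := hπ1
  have hμlb : ∀ i, π1 ≤ μ i := fun i => hlb ⟨i, rfl⟩
  set S := Real.sqrt (max (r ^ 2 - 4 * h * π1) 0) with hS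
  have hS0 : 0 ≤ S := Real.sqrt_nonneg _
  have hSr : S < r := by
    rw [hS, Real.sqrt_lt' hr]
    apply max_lt <;> nlinarith
  have hLS : r / 2 * (1 - Real.sqrt (max (1 - 4 * h * π1 / r ^ 2) 0)) = (r - S) / 2 := by
    have hr2 : (0:ℝ) < r ^ 2 := by positivity
    have h1 : (1 - 4 * h * π1 / r ^ 2) = (r ^ 2 - 4 * h * π1) / r ^ 2 := by field_simp
    have h2 := (max_div_div_right hr2.le (r ^ 2 - 4 * h * π1) 0).symm
    rw [zero_div] at h2
    rw [h1, ← h2, Real.sqrt_div' _ hr2.le, Real.sqrt_sq hr.le, ← hS]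
    field_simp
  have hLpos : 0 < r / 2 * (1 - Real.sqrt (max (1 - 4 * h * π1 / r ^ 2) 0)) := by
    rw [hLS]; linarith
  have hkey := fun (ζ : ℂ) (hζr : ζ + r ≠ 0) => key r h hr hh H hHsymm vd hvd hM ζ hζr
  have hub : ∀ ζ ∈ spectrum ℂ
      ((Matrix.fromBlocks (-(r • (1 : Matrix (Fin d) (Fin d) ℝ))) (h • H)
        (-(Matrix.diagonal vd)) 0).map (algebraMap ℝ ℂ)), ζ.re ≤ (-r + S) / 2 := by
    intro ζ hζ
    by_cases hζr : ζ + r = 0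
    · have hz : ζ = -(r : ℂ) := by linear_combination hζr
      rw [hz]
      simp only [Complex.neg_re, Complex.ofReal_re]
      linarith
    · obtain ⟨i, hi⟩ := (hkey ζ hζr).mp hζ
      exact quad_bound r h (μ i) π1 hh (hμlb i) ζ hi
  have hmem : ∃ ζ ∈ spectrum ℂ
      ((Matrix.fromBlocks (-(r • (1 : Matrix (Fin d) (Fin d) ℝ))) (h • H)
        (-(Matrix.diagonal vd)) 0).map (algebraMap ℝ ℂ)), ζ.re = (-r + S) / 2 := by
    obtain ⟨ζ₀, hq, hre⟩ := quad_root r h π1 hr hh hπ1pos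
    have hζr : ζ₀ + r ≠ 0 := by
      intro hcon
      have hz : ζ₀ = -(r : ℂ) := by linear_combination hcon
      rw [hz] at hq
      have h0 : (h : ℂ) * π1 = 0 := by linear_combination hq
      have h0' : h * π1 = 0 := by exact_mod_cast h0
      nlinarith
    exact ⟨ζ₀, (hkey ζ₀ hζr).mpr ⟨i₀, by rw [show hM.eigenvalues i₀ = π1 from hi₀]; exact hq⟩, hre⟩
  refine ⟨?_, hLpos, ?_, ?_⟩
  · intro ζ hζ
    have := hub ζ hζ
    linarith
  · obtain ⟨ζ₀, hmem0, hre⟩ := hmem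
    exact ⟨ζ₀, hmem0, by rw [hre, hLS]; ring⟩
  · rintro x ⟨ζ, hζ, rfl⟩
    have := hub ζ hζ
    rw [hLS]
    linarith
end

section
/- Let $r_\infty, h_\infty, q_\infty, p_\infty > 0$ be reals, let $H \in \mathbb{R}^{d\times d}$ be symmetric, let $N \in \mathbb{R}^{d\times d}$ be arbitrary, and let $V \in \mathbb{R}^{d\times d}$ be diagonal with positive diagonal. Consider $D = \begin{bmatrix} -q_\infty I_d & 0 & p_\infty N \\ 0 & -r_\infty I_d & h_\infty H \\ 0 & -V & 0 \end{bmatrix} \in \mathbb{R}^{3d\times 3d}$. Then every eigenvalue $\zeta$ of $D$ with $\operatorname{Re}\zeta > 0$ is real, and there is a bijection between the eigenvalues of $D$ with positive real part (with multiplicity) and the negative eigenvalues of $V^{1/2} H V^{1/2}$ (with multiplicity): for each negative eigenvalue $\beta$ of $h_\infty V^{1/2} H V^{1/2}$, the unique positive root $\zeta$ of $\zeta^2 + r_\infty \zeta + \beta = 0$ is an eigenvalue of $D$, and conversely. -/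
open Matrix

section Aux


variable {d : ℕ}

lemma mem_spectrum_matrix_iff {n : Type*} [Fintype n] [DecidableEq n] {K : Type*} [Field K]
    (A : Matrix n n K) (x : K) :
    x ∈ spectrum K A ↔ (x • (1 : Matrix n n K) - A).det = 0 := by
  rw [spectrum.mem_iff, Algebra.algebraMap_eq_smul_one, Matrix.isUnit_iff_isUnit_det,
    isUnit_iff_ne_zero, not_ne_iff]

lemma herm_det_sub (M : Matrix (Fin d) (Fin d) ℝ) (hM : M.IsHermitian) (y : ℝ) :
    (y • (1 : Matrix (Fin d) (Fin d) ℝ) - M).det = ∏ i, (y - hM.eigenvalues i) := by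
  set U : Matrix (Fin d) (Fin d) ℝ := (hM.eigenvectorUnitary : Matrix (Fin d) (Fin d) ℝ) with hUdef
  have hU : U * star U = 1 := Matrix.mem_unitaryGroup_iff.mp hM.eigenvectorUnitary.2
  have key : y • (1 : Matrix (Fin d) (Fin d) ℝ) - M
      = U * (y • 1 - diagonal (RCLike.ofReal ∘ hM.eigenvalues)) * star U := by
    rw [Matrix.mul_sub, Matrix.sub_mul]
    conv_lhs => rw [hM.spectral_theorem, Unitary.conjStarAlgAut_apply]
    congr 1
    rw [Matrix.mul_smul, Matrix.mul_one, Matrix.smul_mul, hU]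
  rw [key, det_mul, det_mul, mul_right_comm, ← det_mul, hU, det_one, one_mul,
    smul_one_eq_diagonal, diagonal_sub, det_diagonal]
  simp [RCLike.ofReal_real_eq_id]

lemma herm_det_add (M : Matrix (Fin d) (Fin d) ℝ) (hM : M.IsHermitian) (x : ℂ) :
    (x • (1 : Matrix (Fin d) (Fin d) ℂ) + M.map (algebraMap ℝ ℂ)).det
      = ∏ i, (x + (hM.eigenvalues i : ℂ)) := by
  set c : ℝ →+* ℂ := algebraMap ℝ ℂ with hc
  set U : Matrix (Fin d) (Fin d) ℝ := (hM.eigenvectorUnitary : Matrix (Fin d) (Fin d) ℝ) with hUdef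
  have hU : U * star U = 1 := Matrix.mem_unitaryGroup_iff.mp hM.eigenvectorUnitary.2
  have hUc : U.map c * (star U).map c = 1 := by
    rw [← Matrix.map_mul, hU, Matrix.map_one c c.map_zero c.map_one]
  have hMc : M.map c = U.map c * diagonal (fun i => (hM.eigenvalues i : ℂ)) * (star U).map c := by
    conv_lhs => rw [hM.spectral_theorem, Unitary.conjStarAlgAut_apply]
    rw [Matrix.map_mul, Matrix.map_mul]
    congr 2
    rw [Matrix.diagonal_map c.map_zero]
    simp [hc, RCLike.ofReal_real_eq_id, Function.comp]
  have key : x • (1 : Matrix (Fin d) (Fin d) ℂ) + M.map c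
      = U.map c * (x • 1 + diagonal (fun i => (hM.eigenvalues i : ℂ))) * (star U).map c := by
    rw [Matrix.mul_add, Matrix.add_mul, ← hMc]
    congr 1
    rw [Matrix.mul_smul, Matrix.mul_one, Matrix.smul_mul, hUc]
  rw [key, det_mul, det_mul, mul_right_comm, ← det_mul, hUc, det_one, one_mul,
    smul_one_eq_diagonal, diagonal_add, det_diagonal]

end Aux


/-- The `3d × 3d` linearization matrix `D`. -/
noncomputable def Dmat {d : ℕ} (q r h p : ℝ) (H N : Matrix (Fin d) (Fin d) ℝ)
    (vd : Fin d → ℝ) : Matrix (Fin d ⊕ (Fin d ⊕ Fin d)) (Fin d ⊕ (Fin d ⊕ Fin d)) ℝ :=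
  Matrix.fromBlocks (-(q • (1 : Matrix (Fin d) (Fin d) ℝ)))
    (Matrix.fromCols 0 (p • N)) 0
    (Matrix.fromBlocks (-(r • (1 : Matrix (Fin d) (Fin d) ℝ))) (h • H)
      (-(Matrix.diagonal vd)) 0)

section Master


variable {d : ℕ}

lemma Dmat_block (q r h p : ℝ) (H N : Matrix (Fin d) (Fin d) ℝ) (vd : Fin d → ℝ) (x : ℂ) :
    x • (1 : Matrix (Fin d ⊕ (Fin d ⊕ Fin d)) (Fin d ⊕ (Fin d ⊕ Fin d)) ℂ)
      - (Dmat q r h p H N vd).map (algebraMap ℝ ℂ)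
    = fromBlocks ((x + (q : ℂ)) • 1) (-(fromCols 0 (p • N)).map (algebraMap ℝ ℂ)) 0
        (fromBlocks ((x + (r : ℂ)) • 1) (-((h : ℂ) • H.map (algebraMap ℝ ℂ)))
          (diagonal fun i => (vd i : ℂ)) (x • 1)) := by
  ext i j
  rcases i with i | i | i <;> rcases j with j | j | j <;>
    simp [Dmat, Matrix.one_apply, Matrix.map_apply, Matrix.diagonal, Matrix.fromCols,
      apply_ite Complex.ofReal, mul_ite, ite_mul, add_mul] <;>
    split <;> simp_all

lemma Dmat_det (q r h p : ℝ) (H N : Matrix (Fin d) (Fin d) ℝ) (vd : Fin d → ℝ)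
    (hvd : ∀ i, 0 < vd i)
    (hM : (h • (Matrix.diagonal (fun i => Real.sqrt (vd i)) * H *
        Matrix.diagonal (fun i => Real.sqrt (vd i)))).IsHermitian)
    (x : ℂ) (hx : x ≠ 0) :
    (x • (1 : Matrix (Fin d ⊕ (Fin d ⊕ Fin d)) (Fin d ⊕ (Fin d ⊕ Fin d)) ℂ)
        - (Dmat q r h p H N vd).map (algebraMap ℝ ℂ)).det
      = (x + (q : ℂ)) ^ d * ∏ i, (x ^ 2 + (r : ℂ) * x + (hM.eigenvalues i : ℂ)) := by
  classical
  set c : ℝ →+* ℂ := algebraMap ℝ ℂ with hc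
  set Hc : Matrix (Fin d) (Fin d) ℂ := H.map c with hHc
  set Wv : Matrix (Fin d) (Fin d) ℂ := diagonal (fun i => (vd i : ℂ)) with hWv
  set Wc : Matrix (Fin d) (Fin d) ℂ := diagonal (fun i => (Real.sqrt (vd i) : ℂ)) with hWc
  rw [Dmat_block, det_fromBlocks_zero₂₁]
  have h1 : ((x + (q:ℂ)) • (1 : Matrix (Fin d) (Fin d) ℂ)).det = (x + (q:ℂ)) ^ d := by
    rw [Matrix.det_smul, det_one, mul_one, Fintype.card_fin]
  haveI : Invertible (x • (1 : Matrix (Fin d) (Fin d) ℂ)) :=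
    ⟨x⁻¹ • 1, by rw [smul_mul_smul_comm, inv_mul_cancel₀ hx, one_smul, mul_one],
      by rw [smul_mul_smul_comm, mul_inv_cancel₀ hx, one_smul, mul_one]⟩
  have hinv : ⅟(x • (1 : Matrix (Fin d) (Fin d) ℂ)) = x⁻¹ • 1 :=
    invOf_eq_right_inv (by rw [smul_mul_smul_comm, mul_inv_cancel₀ hx, one_smul, mul_one])
  rw [det_fromBlocks₂₂, hinv]
  have h2 : (-((h:ℂ) • Hc)) * (x⁻¹ • (1 : Matrix (Fin d) (Fin d) ℂ)) * Wv
      = -(((h:ℂ) * x⁻¹) • (Hc * Wv)) := by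
    rw [Matrix.neg_mul, Matrix.neg_mul, smul_mul_smul_comm, Matrix.mul_one, Matrix.smul_mul]
  rw [h2, sub_neg_eq_add]
  have h3 : (x • (1 : Matrix (Fin d) (Fin d) ℂ)).det = x ^ d := by
    rw [Matrix.det_smul, det_one, mul_one, Fintype.card_fin]
  rw [h3]
  have h5 : (x ^ 2 + (r:ℂ) * x) • (1 : Matrix (Fin d) (Fin d) ℂ) + (h:ℂ) • (Hc * Wv)
      = x • ((x + (r:ℂ)) • (1 : Matrix (Fin d) (Fin d) ℂ) + ((h:ℂ) * x⁻¹) • (Hc * Wv)) := by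
    rw [smul_add, smul_smul, smul_smul]
    congr 2
    · ring
    · field_simp
  have h4 : x ^ d * ((x + (r:ℂ)) • (1 : Matrix (Fin d) (Fin d) ℂ)
        + ((h:ℂ) * x⁻¹) • (Hc * Wv)).det
      = ((x ^ 2 + (r:ℂ) * x) • (1 : Matrix (Fin d) (Fin d) ℂ) + (h:ℂ) • (Hc * Wv)).det := by
    rw [h5, Matrix.det_smul, Fintype.card_fin]
  have hWW : Wc * Wc = Wv := by
    have : (fun i => ((Real.sqrt (vd i) : ℂ)) * ((Real.sqrt (vd i) : ℂ)))
        = fun i => ((vd i : ℂ)) := by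
      funext i
      rw [← Complex.ofReal_mul, Real.mul_self_sqrt (hvd i).le]
    rw [hWc, hWv, diagonal_mul_diagonal, this]
  have hMc : (h • (Matrix.diagonal (fun i => Real.sqrt (vd i)) * H *
        Matrix.diagonal (fun i => Real.sqrt (vd i)))).map c = (h:ℂ) • (Wc * Hc * Wc) := by
    have : (Matrix.diagonal (fun i => Real.sqrt (vd i))).map c = Wc := by
      rw [Matrix.diagonal_map c.map_zero]; rfl
    have hmapsmul : ∀ (a : ℝ) (A : Matrix (Fin d) (Fin d) ℝ),
        (a • A).map c = (a:ℂ) • A.map c := by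
      intro a A
      ext i j
      simp [Matrix.map_apply, hc]
    rw [hmapsmul, Matrix.map_mul, Matrix.map_mul, this]
  have h6 : Wc * ((x ^ 2 + (r:ℂ) * x) • (1 : Matrix (Fin d) (Fin d) ℂ) + (h:ℂ) • (Hc * Wv))
      = ((x ^ 2 + (r:ℂ) * x) • (1 : Matrix (Fin d) (Fin d) ℂ) + (h:ℂ) • (Wc * Hc * Wc)) * Wc := by
    rw [Matrix.mul_add, Matrix.add_mul, Matrix.mul_smul, Matrix.mul_one, Matrix.smul_mul,
      Matrix.one_mul]
    congr 1
    rw [Matrix.mul_smul, Matrix.smul_mul, ← hWW]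
    congr 1
    simp only [← mul_assoc]
  have hdetWc : Wc.det ≠ 0 := by
    rw [hWc, det_diagonal]
    exact Finset.prod_ne_zero_iff.mpr fun i _ =>
      Complex.ofReal_ne_zero.mpr (Real.sqrt_pos.mpr (hvd i)).ne'
  have h7 : ((x ^ 2 + (r:ℂ) * x) • (1 : Matrix (Fin d) (Fin d) ℂ) + (h:ℂ) • (Hc * Wv)).det
      = ((x ^ 2 + (r:ℂ) * x) • (1 : Matrix (Fin d) (Fin d) ℂ) + (h:ℂ) • (Wc * Hc * Wc)).det := by
    have h8 := congrArg det h6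
    rw [det_mul, det_mul] at h8
    exact mul_left_cancel₀ hdetWc (by rw [h8, mul_comm])
  rw [h1, h4, h7, ← hMc, hc, herm_det_add _ hM]

end Master

/-- eigenvalues of `D` with positive real part are real and correspond to
negative eigenvalues of `V^{1/2} H V^{1/2}` via the quadratic `ζ² + r∞ ζ + β = 0`. -/
theorem stmt6 {d : ℕ} (q r h p : ℝ) (hq : 0 < q) (hr : 0 < r) (hh : 0 < h) (hp : 0 < p)
    (H N : Matrix (Fin d) (Fin d) ℝ) (hHsymm : H.IsSymm)
    (vd : Fin d → ℝ) (hvd : ∀ i, 0 < vd i) :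
    (∀ ζ ∈ spectrum ℂ ((Dmat q r h p H N vd).map (algebraMap ℝ ℂ)),
        0 < ζ.re → ζ.im = 0) ∧
    (∀ β ∈ spectrum ℝ (h • (Matrix.diagonal (fun i => Real.sqrt (vd i)) * H *
          Matrix.diagonal (fun i => Real.sqrt (vd i)))),
        β < 0 → ∀ ζ : ℝ, 0 < ζ → ζ ^ 2 + r * ζ + β = 0 →
          ((ζ : ℂ) ∈ spectrum ℂ ((Dmat q r h p H N vd).map (algebraMap ℝ ℂ)))) ∧
    (∀ ζ ∈ spectrum ℂ ((Dmat q r h p H N vd).map (algebraMap ℝ ℂ)),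
        0 < ζ.re →
          ∃ β ∈ spectrum ℝ (h • (Matrix.diagonal (fun i => Real.sqrt (vd i)) * H *
            Matrix.diagonal (fun i => Real.sqrt (vd i)))),
            β < 0 ∧ ζ.re ^ 2 + r * ζ.re + β = 0) := by
  have hHherm : H.IsHermitian := by
    ext i j
    rw [conjTranspose_apply, star_trivial]
    exact hHsymm.apply i j
  have hWherm : (Matrix.diagonal (fun i => Real.sqrt (vd i)))ᴴ
      = Matrix.diagonal (fun i => Real.sqrt (vd i)) := isHermitian_diagonal _
  have hM : (h • (Matrix.diagonal (fun i => Real.sqrt (vd i)) * H *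
      Matrix.diagonal (fun i => Real.sqrt (vd i)))).IsHermitian := by
    have h1 : (Matrix.diagonal (fun i => Real.sqrt (vd i)) * H *
        Matrix.diagonal (fun i => Real.sqrt (vd i))).IsHermitian := by
      have := isHermitian_conjTranspose_mul_mul (A := H)
        (Matrix.diagonal (fun i => Real.sqrt (vd i))) hHherm
      rwa [hWherm] at this
    show _ = _
    rw [conjTranspose_smul, star_trivial, h1.eq]
  have key1 : ∀ ζ : ℂ, ζ ∈ spectrum ℂ ((Dmat q r h p H N vd).map (algebraMap ℝ ℂ)) →
      0 < ζ.re → ζ.im = 0 ∧ ∃ i, (hM.eigenvalues i) < 0 ∧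
        ζ.re ^ 2 + r * ζ.re + hM.eigenvalues i = 0 := by
    intro ζ hζ hre
    have hζ0 : ζ ≠ 0 := fun h0 => by simp [h0] at hre
    rw [mem_spectrum_matrix_iff, Dmat_det q r h p H N vd hvd hM ζ hζ0] at hζ
    have hq0 : (ζ + (q : ℂ)) ^ d ≠ 0 := by
      apply pow_ne_zero
      intro hcon
      have : ζ.re + q = 0 := by simpa using congrArg Complex.re hcon
      linarith
    have hprod : ∏ i, (ζ ^ 2 + (r : ℂ) * ζ + (hM.eigenvalues i : ℂ)) = 0 := by
      rcases mul_eq_zero.mp hζ with h' | h'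
      · exact absurd h' hq0
      · exact h'
    obtain ⟨i, -, hi⟩ := Finset.prod_eq_zero_iff.mp hprod
    have hconj : (starRingEnd ℂ ζ) ^ 2 + (r : ℂ) * (starRingEnd ℂ ζ)
        + (hM.eigenvalues i : ℂ) = 0 := by
      have := congrArg (starRingEnd ℂ) hi
      simpa [map_add, _root_.map_mul, map_pow, Complex.conj_ofReal] using this
    have him : ζ.im = 0 := by
      by_contra him
      have hfac : (ζ - starRingEnd ℂ ζ) * (ζ + starRingEnd ℂ ζ + (r : ℂ)) = 0 := by
        linear_combination hi - hconj
      rcases mul_eq_zero.mp hfac with h' | h'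
      · have : ζ = starRingEnd ℂ ζ := sub_eq_zero.mp h'
        exact him (Complex.conj_eq_iff_im.mp this.symm)
      · have := congrArg Complex.re h'
        simp [Complex.add_re, Complex.conj_re] at this
        linarith
    have hζre : ζ = (ζ.re : ℂ) := by
      apply Complex.ext <;> simp [him]
    have hreal : ζ.re ^ 2 + r * ζ.re + hM.eigenvalues i = 0 := by
      have hcast : ((ζ.re ^ 2 + r * ζ.re + hM.eigenvalues i : ℝ) : ℂ) = 0 := by
        push_cast
        rw [← hζre]
        exact hi
      exact_mod_cast hcast
    exact ⟨him, i, by nlinarith, hreal⟩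
  refine ⟨fun ζ hζ hre => (key1 ζ hζ hre).1, ?_, fun ζ hζ hre => ?_⟩
  · intro β hβ hβneg ζ hζpos hroot
    obtain ⟨i, hi⟩ : ∃ i, hM.eigenvalues i = β := by
      rw [mem_spectrum_matrix_iff, herm_det_sub _ hM, Finset.prod_eq_zero_iff] at hβ
      obtain ⟨i, -, hi⟩ := hβ
      exact ⟨i, (sub_eq_zero.mp hi).symm⟩
    have hz0 : (ζ : ℂ) ≠ 0 := Complex.ofReal_ne_zero.mpr hζpos.ne'
    rw [mem_spectrum_matrix_iff, Dmat_det q r h p H N vd hvd hM _ hz0]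
    have hterm : ((ζ : ℂ) ^ 2 + (r : ℂ) * (ζ : ℂ) + (hM.eigenvalues i : ℂ)) = 0 := by
      rw [hi]
      have hcast : ((ζ ^ 2 + r * ζ + β : ℝ) : ℂ) = 0 := by rw [hroot]; simp
      push_cast at hcast
      exact hcast
    rw [Finset.prod_eq_zero (Finset.mem_univ i) hterm, mul_zero]
  · obtain ⟨him, i, hneg, heq⟩ := key1 ζ hζ hre
    exact ⟨hM.eigenvalues i, hM.eigenvalues_mem_spectrum_real i, hneg, heq⟩
end

section
/- Let $\zeta > 0$ be an eigenvalue of the block matrix $D = \begin{bmatrix} -q_\infty I_d & 0 & p_\infty N \\ 0 & -r_\infty I_d & h_\infty H \\ 0 & -V & 0 \end{bmatrix}$, where $q_\infty, r_\infty, h_\infty, p_\infty > 0$, $H$ is symmetric, $V$ is diagonal positive definite. Let $\beta = -\zeta(r_\infty + \zeta)/1$ (so that $\zeta^2 + r_\infty\zeta + h_\infty\beta' = 0$ with $\beta' = \beta/h_\infty$), and let $w \in \mathbb{R}^{1\times d}$ be a left eigenvector of $V^{1/2} H V^{1/2}$ with eigenvalue $\beta'$, where $h_\infty \beta' = -\zeta(r_\infty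 + \zeta)$. Then the row vector $u = [\,0_{1\times d},\; w V^{1/2},\; -(r_\infty + \zeta)\, w V^{-1/2}\,] \in \mathbb{R}^{1\times 3d}$ satisfies $u D = \zeta u$, i.e., $u$ is a left eigenvector of $D$ for the eigenvalue $\zeta$. -/
open Matrix

/-- the explicit row vector `u = [0, w V^{1/2}, -(r∞+ζ) w V^{-1/2}]` is a
left eigenvector of `D` for the positive eigenvalue `ζ`. -/
theorem stmt8 {d : ℕ} (q r h p : ℝ) (hq : 0 < q) (hr : 0 < r) (hh : 0 < h) (hp : 0 < p)
    (H N : Matrix (Fin d) (Fin d) ℝ) (hHsymm : H.IsSymm)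
    (vd : Fin d → ℝ) (hvd : ∀ i, 0 < vd i)
    (ζ : ℝ) (hζ : 0 < ζ) (hζspec : ζ ∈ spectrum ℝ (Dmat q r h p H N vd))
    (β' : ℝ) (hquad : ζ ^ 2 + r * ζ + h * β' = 0)
    (w : Fin d → ℝ) (hw : w ≠ 0)
    (hwleft : Matrix.vecMul w
      (Matrix.diagonal (fun i => Real.sqrt (vd i)) * H *
        Matrix.diagonal (fun i => Real.sqrt (vd i))) = β' • w) :
    Matrix.vecMul
      (Sum.elim (fun _ : Fin d => (0 : ℝ))
        (Sum.elim (fun i => w i * Real.sqrt (vd i))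
          (fun i => -(r + ζ) * (w i / Real.sqrt (vd i)))))
      (Dmat q r h p H N vd) =
    ζ • (Sum.elim (fun _ : Fin d => (0 : ℝ))
        (Sum.elim (fun i => w i * Real.sqrt (vd i))
          (fun i => -(r + ζ) * (w i / Real.sqrt (vd i))))) := by
  funext j
  rcases j with j | j | j <;>
    simp [Dmat, vecMul, dotProduct, Fintype.sum_sum_type, fromBlocks, fromCols,
      Matrix.one_apply, Matrix.diagonal, Finset.mul_sum, Finset.sum_ite_eq,
      mul_comm, mul_assoc, mul_left_comm]
  case inr.inl =>
    have hs : Real.sqrt (vd j) ≠ 0 := Real.sqrt_ne_zero'.mpr (hvd j)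
    have hv : Real.sqrt (vd j) * Real.sqrt (vd j) = vd j := Real.mul_self_sqrt (hvd j).le
    rw [← hv]
    field_simp
    rw [Real.sqrt_sq (Real.sqrt_nonneg _)]; ring
  -- remaining: third block column
  have hs : Real.sqrt (vd j) ≠ 0 := Real.sqrt_ne_zero'.mpr (hvd j)
  have key := congrFun hwleft j
  simp [vecMul, dotProduct, mul_apply, diagonal, Finset.sum_ite_eq,
    mul_comm, mul_assoc, mul_left_comm] at key
  have key1 : (∑ i : Fin d, H i j * (w i * Real.sqrt (vd i))) * Real.sqrt (vd j)
      = β' * w j := by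
    rw [← key, Finset.sum_mul]
    exact Finset.sum_congr rfl fun i _ => by ring
  have key2 : ∑ x : Fin d, h * (H x j * (w x * Real.sqrt (vd x)))
      = h * β' * w j / Real.sqrt (vd j) := by
    rw [← Finset.mul_sum]
    field_simp
    rw [← key1]; congr 1; exact Finset.sum_congr rfl fun i _ => by ring
  rw [key2]
  have hb : h * β' = -(ζ ^ 2 + r * ζ) := by linarith
  field_simp
  linear_combination w j * hb
end

section
/- Let $d \geq 1$, $\varepsilon > 0$, and let $v, v' \in [0,\infty)^d$ with $v' \geq (1 - \gamma q) v$ componentwise and $v' = (1-\gamma q)v + \gamma p\, s$ for some $s \in [0,\infty)^d$, $0 \leq \gamma q < 1$, $p \geq 0$. Then componentwise, $\sqrt{v + \varepsilon} - \sqrt{v' + \varepsilon} \leq \frac{\gamma q}{\sqrt{1-\gamma q}(1 + \sqrt{1-\gamma q})} \sqrt{v'}$. -/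
lemma sqrt_sub_sqrt_eq (x y : ℝ) (hx : 0 ≤ x) (hy : 0 ≤ y)
    (h : 0 < Real.sqrt x + Real.sqrt y) :
    Real.sqrt x - Real.sqrt y = (x - y) / (Real.sqrt x + Real.sqrt y) := by
  rw [eq_div_iff h.ne']
  nlinarith [Real.sq_sqrt hx, Real.sq_sqrt hy]

/-- componentwise bound on the decrease of `√(v+ε)` along one iteration
of an Adam-type update. -/
theorem stmt10 {d : ℕ} (hd : 1 ≤ d) (ε γ q p : ℝ) (hε : 0 < ε)
    (v v' s : Fin d → ℝ)
    (hv : ∀ i, 0 ≤ v i) (hv' : ∀ i, 0 ≤ v' i) (hs : ∀ i, 0 ≤ s i)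
    (hγq0 : 0 ≤ γ * q) (hγq1 : γ * q < 1) (hpnn : 0 ≤ p)
    (hge : ∀ i, (1 - γ * q) * v i ≤ v' i)
    (heq : ∀ i, v' i = (1 - γ * q) * v i + γ * p * s i) :
    ∀ i, Real.sqrt (v i + ε) - Real.sqrt (v' i + ε) ≤
      (γ * q / (Real.sqrt (1 - γ * q) * (1 + Real.sqrt (1 - γ * q)))) *
        Real.sqrt (v' i) := by
  intro i
  set a := v i with ha
  set b := v' i with hb
  have hδ : (0:ℝ) < 1 - γ * q := by linarith
  have hsd : 0 < Real.sqrt (1 - γ * q) := Real.sqrt_pos.mpr hδ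
  have hsd1 : Real.sqrt (1 - γ * q) ≤ 1 :=
    Real.sqrt_le_one.mpr (by linarith)
  have hcnn : 0 ≤ γ * q / (Real.sqrt (1 - γ * q) * (1 + Real.sqrt (1 - γ * q))) :=
    div_nonneg hγq0 (by positivity)
  have han : 0 ≤ a := hv i
  have hbn : 0 ≤ b := hv' i
  have hD : 0 < Real.sqrt (a + ε) + Real.sqrt (b + ε) := by positivity
  rw [sqrt_sub_sqrt_eq _ _ (by linarith) (by linarith) hD,
    show a + ε - (b + ε) = a - b by ring]
  have hab : a - b ≤ γ * q * a := by
    have := hge i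
    linarith
  rcases le_or_gt (a - b) 0 with h | h
  · exact le_trans (div_nonpos_of_nonpos_of_nonneg h hD.le)
      (mul_nonneg hcnn (Real.sqrt_nonneg b))
  · have hapos : 0 < a := by nlinarith
    have hsapos : 0 < Real.sqrt a := Real.sqrt_pos.mpr hapos
    have hba : Real.sqrt (1 - γ * q) * Real.sqrt a ≤ Real.sqrt b := by
      rw [← Real.sqrt_mul hδ.le]
      exact Real.sqrt_le_sqrt (hge i)
    have hden : Real.sqrt a * (1 + Real.sqrt (1 - γ * q)) ≤
        Real.sqrt (a + ε) + Real.sqrt (b + ε) := by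
      have h1 : Real.sqrt a ≤ Real.sqrt (a + ε) := Real.sqrt_le_sqrt (by linarith)
      have h2 : Real.sqrt b ≤ Real.sqrt (b + ε) := Real.sqrt_le_sqrt (by linarith)
      nlinarith
    have hdpos : 0 < Real.sqrt a * (1 + Real.sqrt (1 - γ * q)) := by positivity
    have step1 : (a - b) / (Real.sqrt (a + ε) + Real.sqrt (b + ε)) ≤
        (γ * q * a) / (Real.sqrt a * (1 + Real.sqrt (1 - γ * q))) :=
      div_le_div₀ (by nlinarith) hab hdpos hden
    have hsa2 : Real.sqrt a * Real.sqrt a = a := Real.mul_self_sqrt han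
    have step2 : (γ * q * a) / (Real.sqrt a * (1 + Real.sqrt (1 - γ * q))) =
        (γ * q * Real.sqrt a) / (1 + Real.sqrt (1 - γ * q)) := by
      rw [div_eq_div_iff hdpos.ne' (by positivity)]
      linear_combination (-(γ * q * (1 + Real.sqrt (1 - γ * q)))) * hsa2
    have step3 : (γ * q * Real.sqrt a) / (1 + Real.sqrt (1 - γ * q)) ≤
        (γ * q / (Real.sqrt (1 - γ * q) * (1 + Real.sqrt (1 - γ * q)))) * Real.sqrt b := by
      rw [div_le_iff₀ (by positivity), div_mul_eq_mul_div, div_mul_eq_mul_div,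
        le_div_iff₀ (by positivity)]
      nlinarith [mul_le_mul_of_nonneg_left hba hγq0]
    linarith [step1, step2.le, step3, step2.ge]
end

section
/- Let $(\mathcal{F}_n)$ be a filtration, $r_\infty > 0$, and let $(r_n)$, $(h_n)$ be bounded nonnegative sequences with $r_n \to r_\infty$. Let $(\gamma_n)$ be positive stepsizes with $\sum_n \gamma_n^2 < \infty$, and suppose $1 - \gamma_{n+1} r_n \geq 0$ for all large $n$. Let $(\Delta_n)$ be a martingale difference sequence with $\sup_n \mathbb{E}[\|\Delta_{n+1}\|^2 \mid \mathcal{F}_n] \leq C$ a.s. for a finite random variable $C$. Define $\tilde m_0 \in \mathbb{R}^d$ and $\tilde m_{n+1} = (1 - \gamma_{n+1} r_n)\tilde m_n + \gamma_{n+1} h_n \Delta_{n+1}$. Then $\sup_n \|\tilde m_n\| < \infty$ almost surely. -/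
open MeasureTheory Filter Set
open scoped ENNReal NNReal

namespace Stmt11Aux

lemma norm_le_sum_abs {d : ℕ} (x : EuclideanSpace ℝ (Fin d)) :
    ‖x‖ ≤ ∑ i, |x i| := by
  rw [EuclideanSpace.norm_eq]
  have h1 : ∑ i, ‖x i‖ ^ 2 ≤ (∑ i, ‖x i‖) ^ 2 :=
    Finset.sum_sq_le_sq_sum_of_nonneg fun i _ => norm_nonneg _
  calc Real.sqrt (∑ i, ‖x i‖ ^ 2) ≤ Real.sqrt ((∑ i, ‖x i‖) ^ 2) := Real.sqrt_le_sqrt h1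
    _ = ∑ i, ‖x i‖ := Real.sqrt_sq (Finset.sum_nonneg fun i _ => norm_nonneg _)
    _ = ∑ i, |x i| := by simp [Real.norm_eq_abs]

lemma coord_sq_le {d : ℕ} (x : EuclideanSpace ℝ (Fin d)) (i : Fin d) :
    x i ^ 2 ≤ ‖x‖ ^ 2 := by
  have h : ‖x‖ ^ 2 = ∑ j, ‖x j‖ ^ 2 := by
    rw [EuclideanSpace.norm_eq, Real.sq_sqrt (Finset.sum_nonneg fun j _ => sq_nonneg _)]
  rw [h]
  simpa [Real.norm_eq_abs, sq_abs] using
    Finset.single_le_sum (f := fun j => ‖x j‖ ^ 2) (fun j _ => sq_nonneg _) (Finset.mem_univ i)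

lemma condexp_proj_zero {Ω : Type*} {m0 : MeasurableSpace Ω} {μ : Measure Ω}
    [IsProbabilityMeasure μ] (𝓕 : Filtration ℕ m0) (n : ℕ)
    {d : ℕ} {f : Ω → EuclideanSpace ℝ (Fin d)} (hf : Integrable f μ)
    (h0 : μ[f|𝓕 n] =ᵐ[μ] 0) (i : Fin d) :
    μ[fun ω => f ω i|𝓕 n] =ᵐ[μ] 0 := by
  have hm : 𝓕 n ≤ m0 := 𝓕.le n
  have hfi : Integrable (fun ω => f ω i) μ :=
    (EuclideanSpace.proj (𝕜 := ℝ) i).integrable_comp hf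
  have key : (0 : Ω → ℝ) =ᵐ[μ] μ[fun ω => f ω i|𝓕 n] := by
    refine ae_eq_condExp_of_forall_setIntegral_eq hm hfi
      (fun s _ _ => (integrable_zero _ _ _).integrableOn)
      (fun s hs _ => ?_)
      ((@stronglyMeasurable_const Ω ℝ (𝓕 n) _ 0).aestronglyMeasurable)
    have h1 : ∫ x in s, f x i ∂μ = (EuclideanSpace.proj (𝕜 := ℝ) i) (∫ x in s, f x ∂μ) := by
      have h' := ContinuousLinearMap.integral_comp_comm (EuclideanSpace.proj (𝕜 := ℝ) i)
        (hf.integrableOn (s := s))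
      simpa using h'
    have h2 : ∫ x in s, f x ∂μ = ∫ x in s, (μ[f|𝓕 n]) x ∂μ :=
      (setIntegral_condExp hm hf hs).symm
    have h3 : ∫ x in s, (μ[f|𝓕 n]) x ∂μ = 0 := by
      rw [integral_congr_ae (ae_restrict_of_ae h0)]; simp
    simp [h1, h2, h3]
  exact key.symm


lemma mart_bound {Ω : Type*} {m0 : MeasurableSpace Ω} {μ : Measure Ω}
    [IsProbabilityMeasure μ] (𝓕 : Filtration ℕ m0)
    (c : ℕ → Ω → ℝ) (v : ℕ → ℝ) (B : ℝ)
    (hc2 : ∀ k, MemLp (c k) 2 μ)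
    (hcSM : ∀ k, StronglyMeasurable[𝓕 (k + 1)] (c k))
    (hc0 : ∀ k, μ[c k|𝓕 k] =ᵐ[μ] 0)
    (hcv : ∀ k, ∫ ω, c k ω ^ 2 ∂μ ≤ v k)
    (hvB : ∀ n, ∑ k ∈ Finset.range n, v k ≤ B) :
    ∀ᵐ ω ∂μ, ∃ M, ∀ n, |∑ k ∈ Finset.range n, c k ω| ≤ M := by
  set Z : ℕ → Ω → ℝ := fun n ω => ∑ k ∈ Finset.range n, c k ω with hZdef
  have hcint : ∀ k, Integrable (c k) μ := fun k => (hc2 k).integrable one_le_two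
  have hZ2 : ∀ n, MemLp (Z n) 2 μ := fun n => memLp_finset_sum _ fun k _ => hc2 k
  have hZint : ∀ n, Integrable (Z n) μ := fun n => (hZ2 n).integrable one_le_two
  have hZsq : ∀ n, Integrable (fun ω => Z n ω ^ 2) μ := fun n =>
    (memLp_two_iff_integrable_sq (hZ2 n).aestronglyMeasurable).mp (hZ2 n)
  have hcsq : ∀ k, Integrable (fun ω => c k ω ^ 2) μ := fun k =>
    (memLp_two_iff_integrable_sq (hc2 k).aestronglyMeasurable).mp (hc2 k)
  have hpqr : (1 : ℝ≥0∞) / 1 = 1 / 2 + 1 / 2 := by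
    rw [ENNReal.add_halves]; simp
  have hZc : ∀ n, Integrable (fun ω => Z n ω * c n ω) μ := fun n =>
    memLp_one_iff_integrable.mp ((hc2 n).smul (hZ2 n) (r := 1))
  have hZSM : ∀ n, StronglyMeasurable[𝓕 n] (Z n) := fun n =>
    Finset.stronglyMeasurable_fun_sum _ fun k hk =>
      (hcSM k).mono (𝓕.mono (Nat.succ_le_of_lt (Finset.mem_range.mp hk)))
  have hmartstep : ∀ n, Z n =ᵐ[μ] μ[Z (n + 1)|𝓕 n] := by
    intro n
    have hsucc : Z (n + 1) = fun ω => Z n ω + c n ω := by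
      funext ω; exact Finset.sum_range_succ _ _
    have h1 : μ[Z (n + 1)|𝓕 n] =ᵐ[μ] μ[Z n|𝓕 n] + μ[c n|𝓕 n] := by
      rw [hsucc]; exact condExp_add (hZint n) (hcint n) _
    have h2 : μ[Z n|𝓕 n] = Z n := condExp_of_stronglyMeasurable (𝓕.le n) (hZSM n) (hZint n)
    filter_upwards [h1, hc0 n] with ω hω1 hω2
    rw [hω1]
    simp [h2, hω2]
  have hmart : Martingale Z 𝓕 μ := martingale_nat (fun n => hZSM n) hZint hmartstep
  have hcross : ∀ n, ∫ ω, Z n ω * c n ω ∂μ = 0 := by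
    intro n
    have hpull : μ[fun ω => Z n ω * c n ω|𝓕 n] =ᵐ[μ] fun ω => Z n ω * (μ[c n|𝓕 n]) ω :=
      condExp_mul_of_stronglyMeasurable_left (hZSM n) (hZc n) (hcint n)
    have h0 : (fun ω => Z n ω * (μ[c n|𝓕 n]) ω) =ᵐ[μ] (fun _ => (0 : ℝ)) := by
      filter_upwards [hc0 n] with ω hω; simp [hω]
    calc ∫ ω, Z n ω * c n ω ∂μ
        = ∫ ω, (μ[fun ω => Z n ω * c n ω|𝓕 n]) ω ∂μ := (integral_condExp (𝓕.le n)).symm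
      _ = 0 := by rw [integral_congr_ae (hpull.trans h0)]; simp
  have hEZ : ∀ n, ∫ ω, Z n ω ^ 2 ∂μ ≤ ∑ k ∈ Finset.range n, v k := by
    intro n; induction n with
    | zero => simp [hZdef]
    | succ n ih =>
      have hexp : ∀ ω, Z (n + 1) ω ^ 2 = Z n ω ^ 2 + (2 * (Z n ω * c n ω) + c n ω ^ 2) := by
        intro ω
        rw [show Z (n + 1) ω = Z n ω + c n ω from Finset.sum_range_succ _ _]; ring
      have hint2' : Integrable (fun ω => 2 * (Z n ω * c n ω) + c n ω ^ 2) μ :=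
        ((hZc n).const_mul 2).add (hcsq n)
      have h2Zc : ∫ ω, 2 * (Z n ω * c n ω) ∂μ = 0 := by
        rw [integral_const_mul, hcross n, mul_zero]
      calc ∫ ω, Z (n + 1) ω ^ 2 ∂μ
          = ∫ ω, (Z n ω ^ 2 + (2 * (Z n ω * c n ω) + c n ω ^ 2)) ∂μ := by simp_rw [hexp]
        _ = (∫ ω, Z n ω ^ 2 ∂μ) + ((∫ ω, 2 * (Z n ω * c n ω) ∂μ) + ∫ ω, c n ω ^ 2 ∂μ) := by
            rw [integral_add (hZsq n) hint2', integral_add ((hZc n).const_mul 2) (hcsq n)]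
        _ ≤ (∑ k ∈ Finset.range n, v k) + (0 + v n) := by
            refine add_le_add ih ?_
            rw [h2Zc]
            exact add_le_add le_rfl (hcv n)
        _ = ∑ k ∈ Finset.range (n + 1), v k := by rw [Finset.sum_range_succ]; ring
  have hbdd : ∀ n, eLpNorm (Z n) 1 μ ≤ ((1 + B).toNNReal : ℝ≥0∞) := by
    intro n
    have habs : ∀ z : ℝ, |z| ≤ 1 + z ^ 2 := fun z => by
      nlinarith [sq_nonneg (|z| - 1), sq_abs z, abs_nonneg z]
    have h1 : ∫ ω, ‖Z n ω‖ ∂μ ≤ 1 + B := by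
      have ha : ∫ ω, ‖Z n ω‖ ∂μ ≤ ∫ ω, (1 + Z n ω ^ 2) ∂μ :=
        integral_mono (hZint n).norm ((integrable_const 1).add (hZsq n))
          (fun ω => by simpa [Real.norm_eq_abs] using habs (Z n ω))
      have hb : ∫ ω, (1 + Z n ω ^ 2) ∂μ = 1 + ∫ ω, Z n ω ^ 2 ∂μ := by
        rw [integral_add (integrable_const 1) (hZsq n)]; simp
      have hc' : ∫ ω, Z n ω ^ 2 ∂μ ≤ B := (hEZ n).trans (hvB n)
      linarith
    have h2 : eLpNorm (Z n) 1 μ = ENNReal.ofReal (∫ ω, ‖Z n ω‖ ∂μ) := by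
      rw [eLpNorm_one_eq_lintegral_enorm, ← ofReal_integral_norm_eq_lintegral_enorm (hZint n)]
    rw [h2]
    exact ENNReal.ofReal_le_ofReal h1
  filter_upwards [hmart.submartingale.ae_tendsto_limitProcess hbdd] with ω hω
  obtain ⟨M, hM⟩ := (hω.abs).bddAbove_range
  exact ⟨M, fun n => hM (Set.mem_range_self n)⟩

lemma bounded_coord {Ω : Type*} {m0 : MeasurableSpace Ω} {μ : Measure Ω}
    [IsProbabilityMeasure μ] (𝓕 : Filtration ℕ m0) {d : ℕ}
    (b : ℕ → ℝ) (T : ℝ) (hT : ∀ n, ∑ k ∈ Finset.range n, b k ^ 2 ≤ T)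
    (Δ : ℕ → Ω → EuclideanSpace ℝ (Fin d)) (hadapt : Adapted 𝓕 Δ)
    (hint : ∀ n, Integrable (Δ n) μ)
    (hint2 : ∀ n, Integrable (fun ω => ‖Δ n ω‖ ^ 2) μ)
    (hmds : ∀ n, μ[Δ (n + 1)|𝓕 n] =ᵐ[μ] 0)
    (K : ℝ) (hK : 0 ≤ K)
    (A : ℕ → Set Ω) (hA : ∀ k, MeasurableSet[𝓕 k] (A k))
    (hAint : ∀ k, ∫ ω in A k, ‖Δ (k + 1) ω‖ ^ 2 ∂μ ≤ K)
    (i : Fin d) :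
    ∀ᵐ ω ∂μ, ∃ M, ∀ n,
      |∑ k ∈ Finset.range n, (A k).indicator (fun ω' => b k * Δ (k + 1) ω' i) ω| ≤ M := by
  have hΔ2 : ∀ k, MemLp (Δ k) 2 μ := fun k =>
    (memLp_two_iff_integrable_sq_norm (hint k).aestronglyMeasurable).mpr (hint2 k)
  have hΔi : ∀ k, MemLp (fun ω => Δ k ω i) 2 μ := fun k =>
    (EuclideanSpace.proj (𝕜 := ℝ) i).comp_memLp' (hΔ2 k)
  have hΔiint : ∀ k, Integrable (fun ω => Δ k ω i) μ := fun k =>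
    (EuclideanSpace.proj (𝕜 := ℝ) i).integrable_comp (hint k)
  have hΔisq : ∀ k, Integrable (fun ω => Δ k ω i ^ 2) μ := fun k =>
    (memLp_two_iff_integrable_sq (hΔi k).aestronglyMeasurable).mp (hΔi k)
  have hcmem : ∀ k, MemLp ((A k).indicator (fun ω' => b k * Δ (k + 1) ω' i)) 2 μ := fun k =>
    MemLp.indicator (𝓕.le k _ (hA k)) ((hΔi (k + 1)).const_mul (b k))
  refine mart_bound 𝓕 (fun k => (A k).indicator (fun ω' => b k * Δ (k + 1) ω' i))
    (fun k => K * b k ^ 2) (K * T) hcmem ?_ ?_ ?_ ?_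
  · intro k
    have h1 : StronglyMeasurable[𝓕 (k + 1)] (fun ω => Δ (k + 1) ω i) :=
      (EuclideanSpace.proj (𝕜 := ℝ) i).continuous.comp_stronglyMeasurable (hadapt (k + 1)).stronglyMeasurable
    exact (h1.const_mul (b k)).indicator ((𝓕.mono k.le_succ) _ (hA k))
  · intro k
    have hproj : μ[fun ω => Δ (k + 1) ω i|𝓕 k] =ᵐ[μ] 0 :=
      condexp_proj_zero 𝓕 k (hint (k + 1)) (hmds k) i
    have hg0 : μ[fun ω => b k * Δ (k + 1) ω i|𝓕 k] =ᵐ[μ] 0 := by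
      have hs := condExp_smul (μ := μ) (m := 𝓕 k) (b k) (fun ω => Δ (k + 1) ω i)
      have h2 : (b k) • (μ[fun ω => Δ (k + 1) ω i|𝓕 k]) =ᵐ[μ] 0 := by
        filter_upwards [hproj] with ω hω
        simp only [Pi.smul_apply, Pi.zero_apply] at hω ⊢
        rw [hω, smul_zero]
      exact hs.trans h2
    have hind : ((A k).indicator (fun ω' => b k * Δ (k + 1) ω' i))
        = fun ω => ((A k).indicator (fun _ => (1 : ℝ)) ω) * (b k * Δ (k + 1) ω i) := by
      funext ω; by_cases hω : ω ∈ A k <;> simp [Set.indicator_apply, hω]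
    show μ[(A k).indicator (fun ω' => b k * Δ (k + 1) ω' i)|𝓕 k] =ᵐ[μ] 0
    rw [hind]
    have hfg : Integrable (fun ω => ((A k).indicator (fun _ => (1 : ℝ)) ω)
        * (b k * Δ (k + 1) ω i)) μ := by
      have := (hcmem k).integrable one_le_two
      rwa [hind] at this
    have hgint : Integrable (fun ω => b k * Δ (k + 1) ω i) μ := (hΔiint (k + 1)).const_mul (b k)
    have hpull := condExp_mul_of_stronglyMeasurable_left
      ((@stronglyMeasurable_const Ω ℝ (𝓕 k) _ 1).indicator (hA k)) hfg hgint
    refine hpull.trans ?_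
    filter_upwards [hg0] with ω hω
    simp only [Pi.mul_apply, Pi.zero_apply] at hω ⊢
    rw [hω, mul_zero]
  · intro k
    have hsq : ∀ ω, ((A k).indicator (fun ω' => b k * Δ (k + 1) ω' i) ω) ^ 2
        = (A k).indicator (fun ω' => b k ^ 2 * Δ (k + 1) ω' i ^ 2) ω := by
      intro ω; by_cases hω : ω ∈ A k
      · simp only [Set.indicator_of_mem hω]; ring
      · simp [Set.indicator_of_notMem hω]
    calc ∫ ω, ((A k).indicator (fun ω' => b k * Δ (k + 1) ω' i) ω) ^ 2 ∂μ
        = ∫ ω, (A k).indicator (fun ω' => b k ^ 2 * Δ (k + 1) ω' i ^ 2) ω ∂μ := by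
          simp_rw [hsq]
      _ = ∫ ω in A k, b k ^ 2 * Δ (k + 1) ω i ^ 2 ∂μ := integral_indicator (𝓕.le k _ (hA k))
      _ = b k ^ 2 * ∫ ω in A k, Δ (k + 1) ω i ^ 2 ∂μ := integral_const_mul _ _
      _ ≤ b k ^ 2 * ∫ ω in A k, ‖Δ (k + 1) ω‖ ^ 2 ∂μ := by
          refine mul_le_mul_of_nonneg_left ?_ (sq_nonneg _)
          exact setIntegral_mono_on (hΔisq (k + 1)).integrableOn (hint2 (k + 1)).integrableOn
            (𝓕.le k _ (hA k)) (fun ω _ => coord_sq_le _ i)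
      _ ≤ b k ^ 2 * K := mul_le_mul_of_nonneg_left (hAint k) (sq_nonneg _)
      _ = K * b k ^ 2 := mul_comm _ _
  · intro n
    rw [← Finset.mul_sum]
    exact mul_le_mul_of_nonneg_left (hT n) hK

lemma sum_bound {Ω : Type*} {m0 : MeasurableSpace Ω} {μ : Measure Ω}
    [IsProbabilityMeasure μ] (𝓕 : Filtration ℕ m0) {d : ℕ}
    (b : ℕ → ℝ) (T : ℝ) (hT : ∀ n, ∑ k ∈ Finset.range n, b k ^ 2 ≤ T)
    (Δ : ℕ → Ω → EuclideanSpace ℝ (Fin d)) (hadapt : Adapted 𝓕 Δ)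
    (hint : ∀ n, Integrable (Δ n) μ)
    (hint2 : ∀ n, Integrable (fun ω => ‖Δ n ω‖ ^ 2) μ)
    (hmds : ∀ n, μ[Δ (n + 1)|𝓕 n] =ᵐ[μ] 0)
    (C : Ω → ℝ)
    (hC : ∀ᵐ ω ∂μ, ∀ n, (μ[fun ω' => ‖Δ (n + 1) ω'‖ ^ 2|𝓕 n]) ω ≤ C ω) :
    ∀ᵐ ω ∂μ, ∃ M, ∀ n, ‖∑ k ∈ Finset.range n, b k • Δ (k + 1) ω‖ ≤ M := by
  set A : ℕ → ℕ → Set Ω := fun q k =>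
    {ω | ∀ j ≤ k, (μ[fun ω' => ‖Δ (j + 1) ω'‖ ^ 2|𝓕 j]) ω ≤ (q : ℝ)} with hAdef
  have hAmeas : ∀ q k, MeasurableSet[𝓕 k] (A q k) := by
    intro q k
    have hrw : A q k
        = ⋂ (j : ℕ) (_ : j ≤ k), {ω | (μ[fun ω' => ‖Δ (j + 1) ω'‖ ^ 2|𝓕 j]) ω ≤ (q : ℝ)} := by
      ext ω; simp [hAdef, Set.mem_iInter]
    rw [hrw]
    refine MeasurableSet.iInter fun j => MeasurableSet.iInter fun hj => ?_
    have hms : Measurable[𝓕 k] (μ[fun ω' => ‖Δ (j + 1) ω'‖ ^ 2|𝓕 j]) :=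
      (stronglyMeasurable_condExp.mono (𝓕.mono hj)).measurable
    exact measurableSet_le hms measurable_const
  have hAint : ∀ (q : ℕ) (k : ℕ), ∫ ω in A q k, ‖Δ (k + 1) ω‖ ^ 2 ∂μ ≤ (q : ℝ) := by
    intro q k
    rw [← setIntegral_condExp (𝓕.le k) (hint2 (k + 1)) (hAmeas q k)]
    have h1 : ∫ ω in A q k, (μ[fun ω' => ‖Δ (k + 1) ω'‖ ^ 2|𝓕 k]) ω ∂μ
        ≤ ∫ ω in A q k, (q : ℝ) ∂μ := by
      refine setIntegral_mono_on integrable_condExp.integrableOn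
        (integrable_const _).integrableOn (𝓕.le k _ (hAmeas q k)) ?_
      intro ω hω
      exact hω k le_rfl
    have h2 : ∫ ω in A q k, (q : ℝ) ∂μ ≤ (q : ℝ) := by
      rw [setIntegral_const, smul_eq_mul]
      have hle1 : (μ (A q k)).toReal ≤ 1 := by
        have hmono : μ (A q k) ≤ μ Set.univ := measure_mono (Set.subset_univ (A q k))
        calc (μ (A q k)).toReal ≤ (μ Set.univ).toReal :=
              ENNReal.toReal_mono (measure_ne_top μ _) hmono
          _ = 1 := by simp
      have hq0 : (0 : ℝ) ≤ (q : ℝ) := Nat.cast_nonneg q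
      nlinarith [ENNReal.toReal_nonneg (a := μ (A q k)), show μ.real (A q k) = (μ (A q k)).toReal from rfl]
    linarith
  have key : ∀ᵐ ω ∂μ, ∀ (q : ℕ) (i : Fin d), ∃ M, ∀ n,
      |∑ k ∈ Finset.range n, (A q k).indicator (fun ω' => b k * Δ (k + 1) ω' i) ω| ≤ M := by
    refine ae_all_iff.mpr fun q => ae_all_iff.mpr fun i => ?_
    exact bounded_coord 𝓕 b T hT Δ hadapt hint hint2 hmds q (Nat.cast_nonneg q) (A q)
      (hAmeas q) (hAint q) i
  filter_upwards [key, hC] with ω hω hCω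
  have hmem : ∀ k, ω ∈ A (⌈C ω⌉₊) k := fun k j _ => (hCω j).trans (Nat.le_ceil _)
  choose M hM using hω ⌈C ω⌉₊
  refine ⟨∑ i, M i, fun n => ?_⟩
  have hcoord : ∀ i : Fin d, (∑ k ∈ Finset.range n, b k • Δ (k + 1) ω) i
      = ∑ k ∈ Finset.range n, (A ⌈C ω⌉₊ k).indicator (fun ω' => b k * Δ (k + 1) ω' i) ω := by
    intro i
    have h1 : (∑ k ∈ Finset.range n, b k • Δ (k + 1) ω) i
        = ∑ k ∈ Finset.range n, b k * Δ (k + 1) ω i := by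
      have h0 := map_sum (EuclideanSpace.proj (𝕜 := ℝ) i)
        (fun k => b k • Δ (k + 1) ω) (Finset.range n)
      simp only [PiLp.proj_apply, PiLp.smul_apply, smul_eq_mul] at h0
      convert h0 using 2
    rw [h1]
    exact Finset.sum_congr rfl fun k _ => (Set.indicator_of_mem (hmem k) (fun ω' => b k * Δ (k + 1) ω' i)).symm
  calc ‖∑ k ∈ Finset.range n, b k • Δ (k + 1) ω‖
      ≤ ∑ i, |(∑ k ∈ Finset.range n, b k • Δ (k + 1) ω) i| := norm_le_sum_abs _
    _ ≤ ∑ i, M i := by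
        refine Finset.sum_le_sum fun i _ => ?_
        rw [hcoord i]
        exact hM i n

end Stmt11Aux

open MeasureTheory Filter in
/-- almost-sure boundedness of the martingale-driven damped recursion
`m̃_{n+1} = (1 - γ_{n+1} r_n) m̃_n + γ_{n+1} h_n Δ_{n+1}`. -/
theorem stmt11 {Ω : Type*} {m0 : MeasurableSpace Ω} {μ : Measure Ω}
    [IsProbabilityMeasure μ] (𝓕 : Filtration ℕ m0) {d : ℕ}
    (r h γ : ℕ → ℝ) (rinf : ℝ) (hrinf : 0 < rinf)
    (hrpos : ∀ n, 0 ≤ r n) (hhpos : ∀ n, 0 ≤ h n)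
    (hrbdd : ∃ R, ∀ n, r n ≤ R) (hhbdd : ∃ Hb, ∀ n, h n ≤ Hb)
    (hrlim : Tendsto r atTop (nhds rinf))
    (hγpos : ∀ n, 0 < γ n) (hγ2 : Summable fun n => γ n ^ 2)
    (hstep : ∃ N, ∀ n ≥ N, 0 ≤ 1 - γ (n + 1) * r n)
    (Δ : ℕ → Ω → EuclideanSpace ℝ (Fin d))
    (hadapt : Adapted 𝓕 Δ)
    (hint : ∀ n, Integrable (Δ n) μ)
    (hint2 : ∀ n, Integrable (fun ω => ‖Δ n ω‖ ^ 2) μ)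
    (hmds : ∀ n, μ[Δ (n + 1) | 𝓕 n] =ᵐ[μ] 0)
    (C : Ω → ℝ)
    (hC : ∀ᵐ ω ∂μ, ∀ n, (μ[fun ω' => ‖Δ (n + 1) ω'‖ ^ 2 | 𝓕 n]) ω ≤ C ω)
    (m0v : EuclideanSpace ℝ (Fin d)) (mt : ℕ → Ω → EuclideanSpace ℝ (Fin d))
    (hmt0 : ∀ ω, mt 0 ω = m0v)
    (hrec : ∀ n ω, mt (n + 1) ω =
      (1 - γ (n + 1) * r n) • mt n ω + (γ (n + 1) * h n) • Δ (n + 1) ω) :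
    ∀ᵐ ω ∂μ, ∃ M, ∀ n, ‖mt n ω‖ ≤ M := by
  obtain ⟨N, hN⟩ := hstep
  obtain ⟨Hb, hHb⟩ := hhbdd
  have hbsum : Summable (fun k => (γ (k + 1) * h k) ^ 2) := by
    have h1 : Summable (fun k => γ (k + 1) ^ 2) := (summable_nat_add_iff 1).mpr hγ2
    have h2 : Summable (fun k => Hb ^ 2 * γ (k + 1) ^ 2) := h1.mul_left _
    refine h2.of_nonneg_of_le (fun k => sq_nonneg _) (fun k => ?_)
    have he : (γ (k + 1) * h k) ^ 2 = γ (k + 1) ^ 2 * h k ^ 2 := by ring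
    rw [he]
    have hh2 : h k ^ 2 ≤ Hb ^ 2 := by nlinarith [hhpos k, hHb k]
    nlinarith [sq_nonneg (γ (k + 1))]
  have hT : ∀ n, ∑ k ∈ Finset.range n, (γ (k + 1) * h k) ^ 2
      ≤ ∑' k, (γ (k + 1) * h k) ^ 2 := fun n =>
    Summable.sum_le_tsum _ (fun k _ => sq_nonneg _) hbsum
  have key := Stmt11Aux.sum_bound 𝓕 (fun k => γ (k + 1) * h k)
    (∑' k, (γ (k + 1) * h k) ^ 2) hT Δ hadapt hint hint2 hmds C hC
  filter_upwards [key] with ω hω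
  obtain ⟨Ms, hMs⟩ := hω
  set S : ℕ → EuclideanSpace ℝ (Fin d) :=
    fun n => ∑ k ∈ Finset.range n, (γ (k + 1) * h k) • Δ (k + 1) ω with hSdef
  have hMs' : ∀ n, ‖S n‖ ≤ Ms := hMs
  set u : ℕ → EuclideanSpace ℝ (Fin d) := fun n => mt n ω - S n with hudef
  have hrecu : ∀ n, u (n + 1) = (1 - γ (n + 1) * r n) • u n - (γ (n + 1) * r n) • S n := by
    intro n
    have hS : S (n + 1) = S n + (γ (n + 1) * h n) • Δ (n + 1) ω := Finset.sum_range_succ _ _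
    show mt (n + 1) ω - S (n + 1) = _
    rw [hrec n ω, hS, hudef]
    simp only [smul_sub, sub_smul, one_smul]
    abel
  set D : ℝ := max (∑ j ∈ Finset.range (N + 1), ‖u j‖) Ms with hDdef
  have hubound : ∀ n, ‖u n‖ ≤ D := by
    intro n
    induction n with
    | zero =>
      refine le_max_of_le_left ?_
      exact Finset.single_le_sum (fun j _ => norm_nonneg (u j))
        (Finset.mem_range.mpr (Nat.succ_pos N))
    | succ n ih =>
      by_cases hn : N ≤ n
      · have ha0 : 0 ≤ 1 - γ (n + 1) * r n := hN n hn
        have ha1 : 0 ≤ γ (n + 1) * r n := mul_nonneg (hγpos _).le (hrpos n)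
        calc ‖u (n + 1)‖
            ≤ ‖(1 - γ (n + 1) * r n) • u n‖ + ‖(γ (n + 1) * r n) • S n‖ := by
              rw [hrecu n]; exact norm_sub_le _ _
          _ = (1 - γ (n + 1) * r n) * ‖u n‖ + (γ (n + 1) * r n) * ‖S n‖ := by
              rw [norm_smul, norm_smul, Real.norm_of_nonneg ha0, Real.norm_of_nonneg ha1]
          _ ≤ (1 - γ (n + 1) * r n) * D + (γ (n + 1) * r n) * D :=
              add_le_add (mul_le_mul_of_nonneg_left ih ha0)
                (mul_le_mul_of_nonneg_left ((hMs' n).trans (le_max_right _ _)) ha1)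
          _ = D := by ring
      · push_neg at hn
        refine le_max_of_le_left ?_
        exact Finset.single_le_sum (fun j _ => norm_nonneg (u j))
          (Finset.mem_range.mpr (by omega))
  refine ⟨D + Ms, fun n => ?_⟩
  have hmu : mt n ω = u n + S n := by rw [hudef]; simp
  calc ‖mt n ω‖ = ‖u n + S n‖ := by rw [hmu]
    _ ≤ ‖u n‖ + ‖S n‖ := norm_add_le _ _
    _ ≤ D + Ms := add_le_add (hubound n) (hMs' n)
end

section
/- Let $r_\infty, h_\infty > 0$ and $\theta \geq 0$ with $r_\infty > 2\theta$. For $k, \ell \in \{1,\dots,d\}$ and positive reals $\pi_1,\dots,\pi_d$, let $\nu_k^\pm = -\frac{r_\infty}{2} \pm \sqrt{r_\infty^2/4 - h_\infty \pi_k}$ (complex square root convention). Then $\frac{-h_\infty^2}{(\nu_k^+ + \nu_\ell^+ + 2\theta)(\nu_k^- + \nu_\ell^- + 2\theta)}\left(\frac{1}{\nu_k^- + \nu_\ell^+ + 2\theta} + \frac{1}{\nu_k^+ + \nu_\ell^- + 2\theta}\right) = \frac{h_\infty^2}{(r_\infty - 2\theta)\big(h_\infty(\pi_k + \pi_\ell)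 + 2\theta(\theta - r_\infty)\big) + \frac{h_\infty^2 (\pi_k - \pi_\ell)^2}{2(r_\infty - 2\theta)}}$, provided all denominators are nonzero. -/
lemma aux14 (a b c H : ℂ) (h1 : c + a + b ≠ 0) (h2 : c - a - b ≠ 0)
    (h3 : c - a + b ≠ 0) (h4 : c + a - b ≠ 0) :
    (-H / ((c + a + b) * (c - a - b))) * (1 / (c - a + b) + 1 / (c + a - b)) =
      -2 * H * c / (c ^ 4 - 2 * c ^ 2 * (a ^ 2 + b ^ 2) + (a ^ 2 - b ^ 2) ^ 2) := by
  rw [show c ^ 4 - 2 * c ^ 2 * (a ^ 2 + b ^ 2) + (a ^ 2 - b ^ 2) ^ 2 =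
      (c + a + b) * (c - a - b) * ((c - a + b) * (c + a - b)) from by ring]
  field_simp
  ring

/-- closed-form identity for the entries of the asymptotic covariance
matrix in the CLT for momentum methods, where
`ν^± = -r∞/2 ± √(r∞²/4 - h∞ π)` (complex square root convention). -/
theorem stmt14 (r h θ πk πl : ℝ) (hr : 0 < r) (hh : 0 < h) (hθ : 0 ≤ θ)
    (hrθ : 2 * θ < r) (hπk : 0 < πk) (hπl : 0 < πl)
    (νkp νkm νlp νlm : ℂ)
    (hνkp : νkp = -(r : ℂ) / 2 + ((r ^ 2 / 4 - h * πk : ℝ) : ℂ) ^ ((1 : ℂ) / 2))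
    (hνkm : νkm = -(r : ℂ) / 2 - ((r ^ 2 / 4 - h * πk : ℝ) : ℂ) ^ ((1 : ℂ) / 2))
    (hνlp : νlp = -(r : ℂ) / 2 + ((r ^ 2 / 4 - h * πl : ℝ) : ℂ) ^ ((1 : ℂ) / 2))
    (hνlm : νlm = -(r : ℂ) / 2 - ((r ^ 2 / 4 - h * πl : ℝ) : ℂ) ^ ((1 : ℂ) / 2))
    (h1 : νkp + νlp + 2 * θ ≠ 0) (h2 : νkm + νlm + 2 * θ ≠ 0)
    (h3 : νkm + νlp + 2 * θ ≠ 0) (h4 : νkp + νlm + 2 * θ ≠ 0)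
    (h5 : (r - 2 * θ) * (h * (πk + πl) + 2 * θ * (θ - r)) +
      h ^ 2 * (πk - πl) ^ 2 / (2 * (r - 2 * θ)) ≠ 0) :
    (-(h : ℂ) ^ 2 / ((νkp + νlp + 2 * θ) * (νkm + νlm + 2 * θ))) *
        (1 / (νkm + νlp + 2 * θ) + 1 / (νkp + νlm + 2 * θ)) =
      ((h ^ 2 / ((r - 2 * θ) * (h * (πk + πl) + 2 * θ * (θ - r)) +
          h ^ 2 * (πk - πl) ^ 2 / (2 * (r - 2 * θ))) : ℝ) : ℂ) := by
  set a : ℂ := ((r ^ 2 / 4 - h * πk : ℝ) : ℂ) ^ ((1 : ℂ) / 2) with ha_def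
  set b : ℂ := ((r ^ 2 / 4 - h * πl : ℝ) : ℂ) ^ ((1 : ℂ) / 2) with hb_def
  have ha : a ^ 2 = ((r ^ 2 / 4 - h * πk : ℝ) : ℂ) := by
    rw [ha_def, show (1 : ℂ) / 2 = ((2 : ℕ) : ℂ)⁻¹ by norm_num]
    exact Complex.cpow_nat_inv_pow _ two_ne_zero
  have hb : b ^ 2 = ((r ^ 2 / 4 - h * πl : ℝ) : ℂ) := by
    rw [hb_def, show (1 : ℂ) / 2 = ((2 : ℕ) : ℂ)⁻¹ by norm_num]
    exact Complex.cpow_nat_inv_pow _ two_ne_zero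
  set c : ℂ := 2 * (θ : ℂ) - r with hc_def
  have E1 : νkp + νlp + 2 * θ = c + a + b := by rw [hνkp, hνlp, hc_def]; ring
  have E2 : νkm + νlm + 2 * θ = c - a - b := by rw [hνkm, hνlm, hc_def]; ring
  have E3 : νkm + νlp + 2 * θ = c - a + b := by rw [hνkm, hνlp, hc_def]; ring
  have E4 : νkp + νlm + 2 * θ = c + a - b := by rw [hνkp, hνlm, hc_def]; ring
  rw [E1] at h1; rw [E2] at h2; rw [E3] at h3; rw [E4] at h4
  rw [E1, E2, E3, E4, aux14 a b c (((h : ℂ)) ^ 2) h1 h2 h3 h4, ha, hb]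
  -- real-side algebra
  set PR : ℝ := (2 * θ - r) ^ 4 -
      2 * (2 * θ - r) ^ 2 * ((r ^ 2 / 4 - h * πk) + (r ^ 2 / 4 - h * πl)) +
      ((r ^ 2 / 4 - h * πk) - (r ^ 2 / 4 - h * πl)) ^ 2 with hPR_def
  set D : ℝ := (r - 2 * θ) * (h * (πk + πl) + 2 * θ * (θ - r)) +
      h ^ 2 * (πk - πl) ^ 2 / (2 * (r - 2 * θ)) with hD_def
  have hcR : (r - 2 * θ : ℝ) ≠ 0 := by linarith
  have hDP : D = PR / (2 * (r - 2 * θ)) := by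
    rw [hD_def, hPR_def]; field_simp; ring
  have hPRne : PR ≠ 0 := by
    intro hP0
    exact h5 (by rw [hDP, hP0, zero_div])
  have hreal : h ^ 2 / D = -2 * h ^ 2 * (2 * θ - r) / PR := by
    rw [hDP]
    rw [div_div_eq_mul_div, div_eq_div_iff hPRne hPRne]
    ring
  rw [hreal, hPR_def, hc_def]
  push_cast
  ring
end
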